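/- arXiv:1609.01928 — 13 statements merged into one kernel-verified Lean document; each statement's English description precedes it below -/
import Mathlib

section
/- Let m be an odd number not divisible by g-1 and let x_t be the largest extreme cycle point in a non-trivial extreme cycle for the digit set {0,m}. Then x_t is divisible by g. -/
/-- A cycle for the digit set `{0, m}` with scale `g`: integers `x i`, digits `l i ∈ {0, m}`,
satisfying `x (i+1) = (x i + l i) / g` cyclically. -/
def IsCycle (g m : ℕ) (r : ℕ) (x l : ZMod r → ℤ) : Prop :=
  0 < r ∧ (∀ i, l i = 0 ∨ l i = (m : ℤ)) ∧ (∀ i, (g : ℤ) * x (i + 1) = x i + l i)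

/-- A non-trivial extreme cycle: a cycle whose digits are not all zero. -/
def IsNontrivialCycle (g m : ℕ) (r : ℕ) (x l : ZMod r → ℤ) : Prop :=
  IsCycle g m r x l ∧ ∃ i, l i ≠ 0

/-- `m` is incomplete if there exists a non-trivial extreme cycle for `{0, m}`. -/
def Incomplete (g m : ℕ) : Prop :=
  ∃ (r : ℕ) (x l : ZMod r → ℤ), IsNontrivialCycle g m r x l

/-- `m` is complete if the only extreme cycle for `{0, m}` is the trivial one. -/
def Complete (g m : ℕ) : Prop := ¬ Incomplete g m

/-- `m` is primitive if it is incomplete and all proper divisors of `m` are complete. -/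
def Primitive (g m : ℕ) : Prop :=
  Incomplete g m ∧ ∀ d : ℕ, d ∣ m → d ≠ m → Complete g d

theorem stmt2 (g m r : ℕ) (hg4 : 4 ≤ g) (hge : Even g) (hm : Odd m)
    (hnd : ¬ (g - 1) ∣ m)
    (x l : ZMod r → ℤ) (h : IsNontrivialCycle g m r x l)
    (t : ZMod r) (hmax : ∀ i, x i ≤ x t) :
    (g : ℤ) ∣ x t := by
  obtain ⟨⟨hr, hl, hrec⟩, -⟩ := h
  rcases hl t with h0 | hM
  · -- l t = 0 : g * x (t+1) = x t
    exact ⟨x (t + 1), by linarith [hrec t]⟩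
  · -- l t = m : maximality forces (g-1) * x t = m, contradiction
    exfalso
    have h1 : (g : ℤ) * x (t + 1) = x t + m := by rw [← hM]; exact hrec t
    have h2 : (g : ℤ) * x t = x (t - 1) + l (t - 1) := by
      have := hrec (t - 1); rwa [sub_add_cancel] at this
    have hle1 : (m : ℤ) ≤ ((g : ℤ) - 1) * x t := by
      have := hmax (t + 1)
      have hg : (0 : ℤ) < g := by positivity
      nlinarith
    have hle2 : ((g : ℤ) - 1) * x t ≤ m := by
      rcases hl (t - 1) with h' | h' <;> nlinarith [hmax (t - 1), hm.pos]
    have heq : ((g : ℤ) - 1) * x t = m := le_antisymm hle2 hle1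
    apply hnd
    have hcast : ((g - 1 : ℕ) : ℤ) = (g : ℤ) - 1 := by
      have : (1 : ℕ) ≤ g := by omega
      push_cast [this]; ring
    have : ((g - 1 : ℕ) : ℤ) ∣ (m : ℤ) := ⟨x t, by rw [hcast, heq.symm]⟩
    exact_mod_cast this
end

section
/- If m is incomplete (i.e., there exists a non-trivial extreme cycle for the digit set {0,m}), then for every odd k ≥ 1, the number km is also incomplete. -/
theorem stmt4 (g m : ℕ) (hg4 : 4 ≤ g) (hge : Even g) (hm : Odd m)
    (h : Incomplete g m) (k : ℕ) (hk : Odd k) (hk1 : 1 ≤ k) :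
    Incomplete g (k * m) := by
  obtain ⟨r, x, l, ⟨⟨hr, hl, hx⟩, i, hi⟩⟩ := h
  refine ⟨r, fun j => k * x j, fun j => k * l j, ⟨hr, ?_, ?_⟩, i, ?_⟩
  · intro j
    rcases hl j with h0 | h0 <;> simp [h0] <;> push_cast <;> ring
  · intro j
    rw [mul_left_comm, hx j, mul_add]
  · have hk0 : (k : ℤ) ≠ 0 := by exact_mod_cast Nat.one_le_iff_ne_zero.mp hk1
    exact mul_ne_zero hk0 hi
end

section
/- Every odd number m with 1 ≤ m ≤ g-2 is complete, i.e., the only extreme cycle for the digit set {0,m} is the trivial cycle {0}. -/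
theorem stmt5 (g m : ℕ) (hg4 : 4 ≤ g) (hge : Even g) (hm : Odd m)
    (h1 : 1 ≤ m) (h2 : m ≤ g - 2) :
    Complete g m := by
  rintro ⟨r, x, l, ⟨⟨hr, hl, hx⟩, i0, hi0⟩⟩
  haveI : NeZero r := ⟨hr.ne'⟩
  have hg : (4:ℤ) ≤ (g:ℤ) := by exact_mod_cast hg4
  have hmg : (m:ℤ) ≤ (g:ℤ) - 2 := by
    have : (m:ℤ) ≤ ((g - 2 : ℕ) : ℤ) := by exact_mod_cast h2
    omega
  obtain ⟨iM, hM⟩ := Finite.exists_max x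
  obtain ⟨im, hmin⟩ := Finite.exists_min x
  have hMle : x iM ≤ 0 := by
    by_contra h
    push_neg at h
    have h1' : (1:ℤ) ≤ x iM := h
    have hxM := hx (iM - 1)
    rw [sub_add_cancel] at hxM
    have hlb : l (iM - 1) ≤ (m:ℤ) := by
      rcases hl (iM - 1) with h' | h' <;> simp [h'] <;> positivity
    have hle := hM (iM - 1)
    nlinarith
  have hmge : 0 ≤ x im := by
    by_contra h
    push_neg at h
    have h1' : x im ≤ -1 := by omega
    have hxm := hx (im - 1)
    rw [sub_add_cancel] at hxm
    have hlb : (0:ℤ) ≤ l (im - 1) := by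
      rcases hl (im - 1) with h' | h' <;> simp [h'] <;> positivity
    have hle := hmin (im - 1)
    nlinarith
  have hx0 : ∀ j, x j = 0 := fun j => le_antisymm
    (le_trans (hM j) hMle) (le_trans hmge (hmin j))
  have := hx i0
  rw [hx0 i0, hx0 (i0 + 1)] at this
  omega
end

section
/- Let x_0 be a cycle point for {0,m} (i.e., x_0 = (g^{r-1} l_{r-1} + ... + g l_1 + l_0)/(g^r-1) for some digits l_i ∈ {0,m}), and suppose x_0 is an integer. Then all points in the cycle generated by x_0 are integers, i.e., x_0 is an extreme cycle point. -/
theorem stmt6 (g m r : ℕ) (hg4 : 4 ≤ g) (hge : Even g) (hm : Odd m) (hr : 0 < r)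
    (l : ZMod r → ℤ) (hl : ∀ i, l i = 0 ∨ l i = (m : ℤ))
    (x0 : ℤ)
    (hx0 : ((g : ℤ) ^ r - 1) * x0 = ∑ k ∈ Finset.range r, (g : ℤ) ^ k * l (k : ZMod r)) :
    ∃ x : ZMod r → ℤ, x 0 = x0 ∧ ∀ i, (g : ℤ) * x (i + 1) = x i + l i := by
  set G : ℤ := (g : ℤ) ^ r - 1 with hG
  have hgne : (1:ℤ) < (g:ℤ) := by exact_mod_cast lt_of_lt_of_le (by norm_num) hg4
  have hGpos : 0 < G := by
    have := one_lt_pow₀ (n := r) hgne hr.ne'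
    omega
  have hGne : G ≠ 0 := hGpos.ne'
  set S : ZMod r → ℤ := fun j => ∑ k ∈ Finset.range r, (g:ℤ) ^ k * l (j + (k:ℕ)) with hS
  have hcop : IsCoprime (G) ((g:ℤ)) := by
    refine ⟨-1, (g:ℤ)^(r-1), ?_⟩
    have : (g:ℤ)^(r-1) * (g:ℤ) = (g:ℤ)^r := by
      rw [← pow_succ]
      congr 1
      omega
    rw [this]; ring
  have key : ∀ j : ZMod r, (g:ℤ) * S (j + 1) = S j + G * l j := by
    intro j
    have h1 : (g:ℤ) * S (j + 1) = ∑ k ∈ Finset.range r, (g:ℤ) ^ (k+1) * l (j + ((k+1:ℕ) : ZMod r)) := by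
      rw [hS, Finset.mul_sum]
      refine Finset.sum_congr rfl fun k _ => ?_
      push_cast
      ring_nf
    rw [h1]
    have h2 : S j = l j + ∑ k ∈ Finset.range (r-1), (g:ℤ) ^ (k+1) * l (j + ((k+1:ℕ) : ZMod r)) := by
      obtain ⟨r', rfl⟩ : ∃ r', r = r' + 1 := ⟨r - 1, by omega⟩
      simp only [hS, Nat.add_sub_cancel]
      rw [Finset.sum_range_succ']
      simp [add_comm]
    have h3 : ∑ k ∈ Finset.range r, (g:ℤ) ^ (k+1) * l (j + ((k+1:ℕ) : ZMod r))
        = (∑ k ∈ Finset.range (r-1), (g:ℤ) ^ (k+1) * l (j + ((k+1:ℕ) : ZMod r))) + (g:ℤ)^r * l j := by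
      obtain ⟨r', rfl⟩ : ∃ r', r = r' + 1 := ⟨r - 1, by omega⟩
      rw [Finset.sum_range_succ]
      simp [ZMod.natCast_self]
    rw [h3, h2]; ring
  have hdvdN : ∀ n : ℕ, G ∣ S ((n : ℕ) : ZMod r) := by
    intro n
    induction n with
    | zero =>
      refine ⟨x0, ?_⟩
      simp only [hS, Nat.cast_zero, zero_add]
      exact hx0.symm
    | succ n ih =>
      have hk := key ((n : ℕ) : ZMod r)
      have : G ∣ (g:ℤ) * S (((n:ℕ) : ZMod r) + 1) := by
        rw [hk]
        exact dvd_add ih (Dvd.intro _ rfl)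
      have hd := (hcop.dvd_of_dvd_mul_left this)
      push_cast
      exact hd
  have hdvd : ∀ j : ZMod r, G ∣ S j := by
    intro j
    haveI : NeZero r := ⟨hr.ne'⟩
    have h := hdvdN j.val
    rwa [ZMod.natCast_val, ZMod.cast_id] at h
  refine ⟨fun j => S j / G, ?_, ?_⟩
  · have h0 : G * (S 0 / G) = S 0 := Int.mul_ediv_cancel' (hdvd 0)
    have hS0 : S 0 = G * x0 := by
      simp only [hS, zero_add]
      rw [← hx0]
    have : G * (S 0 / G) = G * x0 := by rw [h0, hS0]
    exact mul_left_cancel₀ hGne this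
  · intro i
    have e1 : G * ((g:ℤ) * (S (i+1) / G)) = G * (S i / G + l i) := by
      rw [mul_left_comm, Int.mul_ediv_cancel' (hdvd (i+1)), key i, mul_add,
        Int.mul_ediv_cancel' (hdvd i)]
    exact mul_left_cancel₀ hGne e1
end

section
/- Assume m > g-1 is odd and relatively prime to g. If a coset C of the cyclic subgroup G_{m,g} generated by g in the unit group of Z/mZ has the property that every element x of C (represented in {1,...,m-1}) satisfies x < 2m/g, then C (as a set of integers) is an extreme cycle for the digit set {0,m}. -/
theorem stmt7 (g m : ℕ) (hg4 : 4 ≤ g) (hge : Even g) (hm : Odd m)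
    (hmg : g - 1 < m) (hco : Nat.Coprime g m)
    (x0 : (ZMod m)ˣ)
    (C : Set (ZMod m)ˣ)
    (hC : C = {y | ∃ h ∈ Subgroup.zpowers (ZMod.unitOfCoprime g hco), y = x0 * h})
    (hsmall : ∀ y ∈ C, g * ((y : ZMod m).val) < 2 * m) :
    ∃ (r : ℕ) (x l : ZMod r → ℤ), IsNontrivialCycle g m r x l ∧
      Set.range x = (fun y : (ZMod m)ˣ => (((y : ZMod m).val : ℤ))) '' C := by
  have hm4 : 4 ≤ m := by omega
  haveI : NeZero m := ⟨by omega⟩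
  haveI : Fact (1 < m) := ⟨by omega⟩
  set u := ZMod.unitOfCoprime g hco with hu
  set r := orderOf u with hr
  have hr0 : 0 < r := orderOf_pos u
  haveI : NeZero r := ⟨hr0.ne'⟩
  -- key congruence for zpow
  have key : ∀ a b : ℤ, ((a : ZMod r) = (b : ZMod r)) → u ^ a = u ^ b := by
    intro a b h
    exact zpow_eq_zpow_iff_modEq.mpr ((ZMod.intCast_eq_intCast_iff _ _ _).mp h)
  set y : ZMod r → (ZMod m)ˣ := fun i => x0 * u ^ (-(i.val : ℤ)) with hy
  have hyC : ∀ i, y i ∈ C := by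
    intro i
    rw [hC]
    exact ⟨u ^ (-(i.val : ℤ)), zpow_mem (Subgroup.mem_zpowers u) _, rfl⟩
  have hcastval : ∀ i : ZMod r, ((i.val : ℕ) : ZMod r) = i := fun i => by
    rw [ZMod.natCast_val, ZMod.cast_id]
  have hstep : ∀ i : ZMod r, u * y (i + 1) = y i := by
    intro i
    have h1 : u ^ (1 - (((i + 1 : ZMod r)).val : ℤ)) = u ^ (-(i.val : ℤ)) := by
      apply key
      push_cast
      rw [hcastval, hcastval]
      ring
    have h2 : u * y (i + 1) = x0 * u ^ (1 - (((i + 1 : ZMod r)).val : ℤ)) := by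
      rw [hy]
      simp only [sub_eq_add_neg, zpow_add, zpow_one]
      rw [mul_left_comm]
    rw [h2, h1]
  set x : ZMod r → ℤ := fun i => (((y i : ZMod m)).val : ℤ) with hx
  set l : ZMod r → ℤ := fun i => (g : ℤ) * x (i + 1) - x i with hl
  have hx_pos : ∀ i, 0 < x i := by
    intro i
    have hne : ((y i : ZMod m)) ≠ 0 := Units.ne_zero _
    have : (y i : ZMod m).val ≠ 0 := fun h => hne ((ZMod.val_eq_zero _).mp h)
    simp only [hx]
    omega
  have hx_lt : ∀ i, x i < m := by
    intro i
    simp only [hx]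
    exact_mod_cast ZMod.val_lt _
  have hgx : ∀ i, (g : ℤ) * x i < 2 * m := by
    intro i
    have := hsmall (y i) (hyC i)
    simp only [hx]
    exact_mod_cast this
  have hdvd : ∀ i : ZMod r, (m : ℤ) ∣ l i := by
    intro i
    have hcoeu : ((u : ZMod m)) = (g : ZMod m) := ZMod.coe_unitOfCoprime g hco
    have h1 : (g : ZMod m) * ((y (i + 1) : ZMod m)) = ((y i : ZMod m)) := by
      rw [← hcoeu]
      exact_mod_cast congrArg (Units.val) (hstep i)
    have : ((l i : ℤ) : ZMod m) = 0 := by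
      simp only [hl, hx]
      push_cast [ZMod.natCast_val, ZMod.cast_id]
      rw [h1]
      ring
    exact (ZMod.intCast_zmod_eq_zero_iff_dvd _ _).mp this
  have hl01 : ∀ i, l i = 0 ∨ l i = (m : ℤ) := by
    intro i
    obtain ⟨k, hk⟩ := hdvd i
    have h1 : -(m : ℤ) < l i := by
      have := hgx (i + 1)
      have := hx_pos (i + 1)
      have := hx_lt i
      have hg0 : (0 : ℤ) < g := by exact_mod_cast (by omega : 0 < g)
      simp only [hl]
      nlinarith
    have h2 : l i < 2 * m := by
      have := hgx (i + 1)
      have := hx_pos i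
      simp only [hl]
      omega
    have hm0 : (0 : ℤ) < m := by exact_mod_cast (by omega : 0 < m)
    have hk1 : -1 < k := by nlinarith
    have hk2 : k < 2 := by nlinarith
    interval_cases k
    · left; omega
    · right; omega
  refine ⟨r, x, l, ⟨⟨hr0, hl01, fun i => by simp only [hl]; ring⟩, ?_⟩, ?_⟩
  · -- nontrivial
    by_contra hall
    push_neg at hall
    obtain ⟨j, hj⟩ := Finite.exists_max x
    have h0 : l (j - 1) = 0 := hall _
    have h1 : (g : ℤ) * x ((j - 1) + 1) = x (j - 1) := by
      have := hl01 (j - 1)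
      simp only [hl] at h0
      linarith [h0]
    rw [sub_add_cancel] at h1
    have hgZ : (4 : ℤ) ≤ g := by exact_mod_cast hg4
    have := hj (j - 1)
    have := hx_pos j
    nlinarith
  · -- range
    ext z
    simp only [Set.mem_range, Set.mem_image]
    constructor
    · rintro ⟨i, rfl⟩
      exact ⟨y i, hyC i, rfl⟩
    · rintro ⟨w, hw, rfl⟩
      rw [hC] at hw
      obtain ⟨h, hmem, rfl⟩ := hw
      obtain ⟨k, rfl⟩ := Subgroup.mem_zpowers_iff.mp hmem
      refine ⟨((-k : ℤ) : ZMod r), ?_⟩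
      have : u ^ (-(((((-k : ℤ) : ZMod r)).val : ℤ))) = u ^ k := by
        apply key
        push_cast
        rw [hcastval]
        push_cast
        ring
      simp only [hx, hy, this]
end

section
/- Let m > g-1 be an odd number not divisible by g-1. If some c with 2 ≤ c ≤ g-1, or some c ≡ -j (mod m) with 1 ≤ j ≤ g-2, belongs to the subgroup of (Z/mZ)^× generated by g, then m is complete (has no non-trivial extreme cycle for the digit set {0,m}). -/
theorem stmt8 (g m : ℕ) (hg4 : 4 ≤ g) (hge : Even g) (hm : Odd m)
    (hmg : g - 1 < m) (hnd : ¬ (g - 1) ∣ m)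
    (h : ∃ c : ℤ, ((2 ≤ c ∧ c ≤ (g : ℤ) - 1) ∨ (1 ≤ -c ∧ -c ≤ (g : ℤ) - 2)) ∧
      ∃ j : ℕ, ((g : ZMod m)) ^ j = (c : ZMod m)) :
    Complete g m := by
  rintro ⟨r, x, l, ⟨⟨hr, hl, hx⟩, i0, hi0⟩⟩
  haveI : NeZero r := ⟨hr.ne'⟩
  have hm5 : 5 ≤ m := by
    rcases hm with ⟨k, hk⟩; omega
  have hmZ : (5 : ℤ) ≤ (m : ℤ) := by exact_mod_cast hm5
  have hG : (4 : ℤ) ≤ (g : ℤ) := by exact_mod_cast hg4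
  -- digits are nonnegative
  have hlnn : ∀ i, 0 ≤ l i := by
    intro i; rcases hl i with h' | h' <;> rw [h'] <;> positivity
  have hlm : ∀ i, l i ≤ (m : ℤ) := by
    intro i; rcases hl i with h' | h' <;> rw [h'] <;> linarith
  -- all cycle points are nonnegative
  obtain ⟨imin, hminsp⟩ := Finite.exists_min x
  have hxnn : ∀ i, 0 ≤ x i := by
    have h1 := hx (imin - 1)
    rw [sub_add_cancel] at h1
    have h2 : (g : ℤ) * x imin ≥ x imin := by
      have := hminsp (imin - 1); have := hlnn (imin - 1); linarith
    have h3 : 0 ≤ x imin := by nlinarith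
    intro i; exact le_trans h3 (hminsp i)
  -- all cycle points are positive
  have hxpos : ∀ i, 0 < x i := by
    by_contra hcon
    push_neg at hcon
    obtain ⟨i, hi⟩ := hcon
    have hi0' : x i = 0 := le_antisymm hi (hxnn i)
    have key : ∀ k : ℕ, x (i - (k : ZMod r)) = 0 := by
      intro k
      induction k with
      | zero => simpa using hi0'
      | succ n ih =>
        have h1 := hx (i - ((n : ZMod r) + 1))
        have h2 : i - ((n : ZMod r) + 1) + 1 = i - (n : ZMod r) := by ring
        rw [h2, ih] at h1
        have := hxnn (i - ((n : ZMod r) + 1))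
        have := hlnn (i - ((n : ZMod r) + 1))
        have hx0 : x (i - ((n : ZMod r) + 1)) = 0 := by linarith
        have h3 : ((n + 1 : ℕ) : ZMod r) = (n : ZMod r) + 1 := by push_cast; ring
        rw [h3]; exact hx0
    have hall : ∀ j : ZMod r, x j = 0 := by
      intro j
      have : ((i - j).val : ZMod r) = i - j := ZMod.natCast_rightInverse (i - j)
      have h4 : i - ((i - j).val : ZMod r) = j := by rw [this]; ring
      have := key (i - j).val
      rwa [h4] at this
    have h5 := hx i0
    rw [hall i0, hall (i0 + 1)] at h5
    have : l i0 = 0 := by linarith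
    exact hi0 this
  -- upper bound: (g - 1) * x i < m
  obtain ⟨imax, hmaxsp⟩ := Finite.exists_max x
  have hub : ∀ i, ((g : ℤ) - 1) * x i < (m : ℤ) := by
    have h1 := hx (imax - 1)
    rw [sub_add_cancel] at h1
    have h2 : ((g : ℤ) - 1) * x imax ≤ (m : ℤ) := by
      have := hmaxsp (imax - 1); have := hlm (imax - 1); linarith
    have h3 : ((g : ℤ) - 1) * x imax ≠ (m : ℤ) := by
      intro heq
      apply hnd
      have hcast : ((g - 1 : ℕ) : ℤ) = (g : ℤ) - 1 := by
        have : 1 ≤ g := by omega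
        push_cast [this]; ring
      have : ((g - 1 : ℕ) : ℤ) ∣ (m : ℤ) := ⟨x imax, by rw [hcast, ← heq]⟩
      exact_mod_cast this
    intro i
    have h4 : x i ≤ x imax := hmaxsp i
    have h5 : ((g : ℤ) - 1) * x i ≤ ((g : ℤ) - 1) * x imax := by nlinarith
    omega
  -- orbit lemma: x (i - k) ≡ g^k * x i (mod m)
  have horb : ∀ (i : ZMod r) (k : ℕ),
      ((x (i - (k : ZMod r)) : ℤ) : ZMod m) = (g : ZMod m) ^ k * ((x i : ℤ) : ZMod m) := by
    intro i k
    induction k with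
    | zero => simp
    | succ n ih =>
      have h1 := hx (i - ((n : ℕ) : ZMod r) - 1)
      have h2 : i - ((n : ℕ) : ZMod r) - 1 + 1 = i - ((n : ℕ) : ZMod r) := by ring
      rw [h2] at h1
      have h3 : ((l (i - ((n : ℕ) : ZMod r) - 1) : ℤ) : ZMod m) = 0 := by
        rcases hl (i - ((n : ℕ) : ZMod r) - 1) with h' | h' <;> rw [h'] <;> simp
      have h4 : ((x (i - ((n : ℕ) : ZMod r) - 1) : ℤ) : ZMod m)
          = (g : ZMod m) * ((x (i - ((n : ℕ) : ZMod r)) : ℤ) : ZMod m) := by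
        have := congrArg (fun z : ℤ => (z : ZMod m)) h1
        simp only [Int.cast_mul, Int.cast_add, Int.cast_natCast] at this
        rw [this, h3, add_zero]
      have h5 : i - (((n + 1 : ℕ)) : ZMod r) = i - ((n : ℕ) : ZMod r) - 1 := by
        push_cast; ring
      rw [h5, h4, ih, pow_succ]; ring
  -- main argument
  obtain ⟨c, hc, j, hgj⟩ := h
  set X := x imax with hXdef
  set Y := x (imax - (j : ZMod r)) with hYdef
  have hXpos : 0 < X := hxpos imax
  have hXub : ((g : ℤ) - 1) * X < (m : ℤ) := hub imax
  have hYpos : 0 < Y := hxpos _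
  have hYub : ((g : ℤ) - 1) * Y < (m : ℤ) := hub _
  have hYX : Y ≤ X := hmaxsp _
  have hYlt : Y < (m : ℤ) := by nlinarith
  have hYmod : ((Y : ℤ) : ZMod m) = ((c * X : ℤ) : ZMod m) := by
    have := horb imax j
    rw [hgj] at this
    rw [hYdef]; rw [this]; push_cast; ring
  have hYemod : Y % (m : ℤ) = (c * X) % (m : ℤ) :=
    (ZMod.intCast_eq_intCast_iff' _ _ _).mp hYmod
  have hYeq : Y % (m : ℤ) = Y := Int.emod_eq_of_lt hYpos.le hYlt
  rcases hc with ⟨hc2, hcg⟩ | ⟨hc1, hcg⟩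
  · -- case 2 ≤ c ≤ g - 1
    have hcX1 : 0 ≤ c * X := by positivity
    have hcX2 : c * X < (m : ℤ) := by nlinarith
    have : c * X % (m : ℤ) = c * X := Int.emod_eq_of_lt hcX1 hcX2
    have hfin : Y = c * X := by rw [← hYeq, hYemod, this]
    nlinarith
  · -- case c ≡ -j', 1 ≤ j' ≤ g - 2
    have hZ1 : 0 ≤ (m : ℤ) + c * X := by nlinarith
    have hZ2 : (m : ℤ) + c * X < (m : ℤ) := by nlinarith
    have hZmod : ((m : ℤ) + c * X) % (m : ℤ) = (m : ℤ) + c * X :=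
      Int.emod_eq_of_lt hZ1 hZ2
    have hceq : c * X % (m : ℤ) = ((m : ℤ) + c * X) % (m : ℤ) := by
      rw [show (m : ℤ) + c * X = c * X + (m : ℤ) * 1 by ring, Int.add_mul_emod_self_left]
    have hfin : Y = (m : ℤ) + c * X := by rw [← hYeq, hYemod, hceq, hZmod]
    nlinarith [hub (imax - (j : ZMod r))]
end

section
/- Let m > g(g-1) be an odd number not divisible by g-1. If some c with g+1 ≤ c ≤ g(g-1) is congruent mod m to an element of the subgroup of (Z/mZ)^× generated by g, then m is complete. -/
theorem stmt9 (g m : ℕ) (hg4 : 4 ≤ g) (hge : Even g) (hm : Odd m)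
    (hmg : g * (g - 1) < m) (hnd : ¬ (g - 1) ∣ m)
    (h : ∃ c : ℕ, g + 1 ≤ c ∧ c ≤ g * (g - 1) ∧
      ∃ j : ℕ, ((g : ZMod m)) ^ j = (c : ZMod m)) :
    Complete g m := by
  intro hinc
  obtain ⟨c, hc1, hc2, j, hj⟩ := h
  obtain ⟨r, x, l, ⟨⟨hr, hl, hrel⟩, i₂, hi₂⟩⟩ := hinc
  haveI : NeZero r := ⟨hr.ne'⟩
  have hg1 : 1 ≤ g := by omega
  have hm0 : 0 < m := by nlinarith
  have hg : (4:ℤ) ≤ (g:ℤ) := by exact_mod_cast hg4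
  have hmZ : (0:ℤ) < (m:ℤ) := by exact_mod_cast hm0
  obtain ⟨i₀, hmax⟩ := Finite.exists_max x
  obtain ⟨i₁, hmin⟩ := Finite.exists_min x
  -- all cycle points are nonnegative
  have hnonneg : ∀ i, 0 ≤ x i := by
    have h1 := hrel (i₁ - 1)
    have h2 : (i₁ - 1) + 1 = i₁ := by ring
    rw [h2] at h1
    have hmin1 := hmin (i₁ - 1)
    have hx1 : 0 ≤ x i₁ := by
      rcases hl (i₁ - 1) with h0 | h0 <;> rw [h0] at h1 <;> nlinarith
    intro i; linarith [hmin i]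
  -- (g-1) * max ≤ m
  have hMle : ((g:ℤ) - 1) * x i₀ ≤ m := by
    have h1 := hrel (i₀ - 1)
    have h2 : (i₀ - 1) + 1 = i₀ := by ring
    rw [h2] at h1
    have hmax1 := hmax (i₀ - 1)
    rcases hl (i₀ - 1) with h0 | h0 <;> rw [h0] at h1 <;> nlinarith
  -- strict inequality via (g-1) ∤ m
  have hMne : ((g:ℤ) - 1) * x i₀ ≠ m := by
    intro heq
    apply hnd
    have hcast : ((g - 1 : ℕ) : ℤ) = (g:ℤ) - 1 := by
      push_cast [Nat.cast_sub hg1]; ring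
    have : ((g - 1 : ℕ) : ℤ) ∣ (m:ℤ) := by rw [hcast]; exact ⟨x i₀, heq.symm⟩
    exact_mod_cast this
  have hMlt : ((g:ℤ) - 1) * x i₀ < m := lt_of_le_of_ne hMle hMne
  -- the max point is positive
  have hMpos : 0 < x i₀ := by
    by_contra hneg
    push_neg at hneg
    have hz : ∀ i, x i = 0 := fun i => le_antisymm (le_trans (hmax i) hneg) (hnonneg i)
    have h1 := hrel i₂
    rw [hz, hz] at h1
    apply hi₂; linarith
  -- the digit at the max point is 0, so g ∣ max
  have hrel0 := hrel i₀
  have hl0 : l i₀ = 0 := by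
    rcases hl i₀ with h0 | h0
    · exact h0
    · exfalso
      rw [h0] at hrel0
      have hle := mul_le_mul_of_nonneg_left (hmax (i₀ + 1)) (by linarith : (0:ℤ) ≤ g)
      nlinarith
  rw [hl0, add_zero] at hrel0
  -- hrel0 : g * x (i₀ + 1) = x i₀
  set Y := x (i₀ + 1) with hYdef
  have hYpos : 0 < Y := by nlinarith
  -- key modular identity
  have key : ∀ (n : ℕ) (i : ZMod r),
      (g : ZMod m) ^ n * ((x (i + (n : ZMod r)) : ℤ) : ZMod m) = ((x i : ℤ) : ZMod m) := by
    intro n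
    induction n with
    | zero => intro i; simp
    | succ n ih =>
      intro i
      have h1 := hrel (i + (n : ZMod r))
      have hln : ((l (i + (n : ZMod r)) : ℤ) : ZMod m) = 0 := by
        rcases hl (i + (n : ZMod r)) with h0 | h0 <;> simp [h0]
      have h2 : (g : ZMod m) * ((x ((i + (n : ZMod r)) + 1) : ℤ) : ZMod m)
          = ((x (i + (n : ZMod r)) : ℤ) : ZMod m) := by
        have := congrArg (fun t : ℤ => ((t : ZMod m))) h1
        push_cast at this
        rw [this, hln, add_zero]
      have h3 : i + ((n + 1 : ℕ) : ZMod r) = (i + (n : ZMod r)) + 1 := by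
        push_cast; ring
      rw [h3, pow_succ, mul_assoc, h2]
      exact ih i
  -- apply with the given c ≡ g^j
  have hk := key j (i₀ + 1 - (j : ZMod r))
  have hi3 : (i₀ + 1 - (j : ZMod r)) + (j : ZMod r) = i₀ + 1 := by ring
  rw [hi3, hj] at hk
  set z := x (i₀ + 1 - (j : ZMod r)) with hzdef
  -- hk : (c : ZMod m) * (Y : ZMod m) = (z : ZMod m)
  have hcast2 : (((c : ℤ) * Y : ℤ) : ZMod m) = ((z : ℤ) : ZMod m) := by
    push_cast
    exact_mod_cast hk
  have hdvd : (m:ℤ) ∣ (c : ℤ) * Y - z := by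
    have := (ZMod.intCast_eq_intCast_iff _ _ _).mp hcast2
    exact Int.ModEq.dvd this.symm
  have hc1' : (g:ℤ) + 1 ≤ (c:ℤ) := by exact_mod_cast hc1
  have hc2' : (c:ℤ) ≤ (g:ℤ) * ((g:ℤ) - 1) := by
    have : ((g * (g-1) : ℕ) : ℤ) = (g:ℤ) * ((g:ℤ) - 1) := by
      push_cast [Nat.cast_sub hg1]; ring
    calc (c:ℤ) ≤ ((g * (g-1) : ℕ) : ℤ) := by exact_mod_cast hc2
    _ = (g:ℤ) * ((g:ℤ) - 1) := this
  have hz0 : 0 ≤ z := hnonneg _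
  have hzM : z ≤ x i₀ := hmax _
  -- bounds: 0 < c*Y - z < m
  have h4 := mul_le_mul_of_nonneg_right hc2' hYpos.le
  have h5 : (g:ℤ) * ((g:ℤ) - 1) * Y = ((g:ℤ) - 1) * x i₀ := by rw [← hrel0]; ring
  have h6 := mul_le_mul_of_nonneg_right hc1' hYpos.le
  have hlow : 0 < (c:ℤ) * Y - z := by linarith
  have hhigh : (c:ℤ) * Y - z < m := by linarith
  have := Int.le_of_dvd hlow hdvd
  linarith
end

section
/- For n ≥ 1 and odd j with 1 ≤ j ≤ g-1, the number g^n + j is complete (the only extreme cycle for the digit set {0, g^n+j} with scale g is the trivial one). -/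
set_option maxHeartbeats 2000000 in
theorem stmt10 (g n j : ℕ) (hg4 : 4 ≤ g) (hge : Even g)
    (hn : 1 ≤ n) (hj : Odd j) (hj1 : 1 ≤ j) (hj2 : j ≤ g - 1) :
    Complete g (g ^ n + j) := by
  rintro ⟨r, x, l, ⟨⟨hr, hl, hcyc⟩, i₁, hi₁⟩⟩
  haveI : NeZero r := ⟨hr.ne'⟩
  set m : ℕ := g ^ n + j with hm
  have hgZ : (4 : ℤ) ≤ (g : ℤ) := by exact_mod_cast hg4
  have hjZ1 : (1 : ℤ) ≤ (j : ℤ) := by exact_mod_cast hj1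
  have hjg : (j : ℤ) ≤ (g : ℤ) - 1 := by omega
  have hmZ : (m : ℤ) = (g : ℤ) ^ n + (j : ℤ) := by push_cast [hm]; ring
  have hm1 : (1 : ℤ) ≤ (m : ℤ) := by
    have : 1 ≤ m := le_trans hj1 (Nat.le_add_left j _)
    exact_mod_cast this
  have hlnn : ∀ i, 0 ≤ l i := by
    intro i; rcases hl i with h | h
    · simp [h]
    · rw [h]; positivity
  have hlub : ∀ i, l i ≤ (m : ℤ) := by
    intro i; rcases hl i with h | h
    · rw [h]; exact le_trans zero_le_one hm1
    · rw [h]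
  have hldvd : ∀ i, (m : ℤ) ∣ l i := by
    intro i; rcases hl i with h | h
    · simp [h]
    · simp [h]
  -- upper bound : (g-1) * x i ≤ m
  obtain ⟨imax, -, hmax⟩ := Finset.exists_max_image Finset.univ x ⟨0, Finset.mem_univ 0⟩
  have hub : ∀ i, ((g : ℤ) - 1) * x i ≤ (m : ℤ) := by
    have hc := hcyc (imax - 1)
    rw [sub_add_cancel] at hc
    have h1 : x (imax - 1) ≤ x imax := hmax _ (Finset.mem_univ _)
    have h2 : l (imax - 1) ≤ (m : ℤ) := hlub _
    have hmax' : ((g : ℤ) - 1) * x imax ≤ (m : ℤ) := by nlinarith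
    intro i
    have h3 : x i ≤ x imax := hmax _ (Finset.mem_univ _)
    nlinarith
  -- lower bound : 0 ≤ x i
  obtain ⟨imin, -, hminp⟩ := Finset.exists_min_image Finset.univ x ⟨0, Finset.mem_univ 0⟩
  have hlb : ∀ i, 0 ≤ x i := by
    have hc := hcyc (imin - 1)
    rw [sub_add_cancel] at hc
    have h1 : x imin ≤ x (imin - 1) := hminp _ (Finset.mem_univ _)
    have h2 : 0 ≤ l (imin - 1) := hlnn _
    have hmin' : 0 ≤ x imin := by nlinarith
    intro i
    exact le_trans hmin' (hminp _ (Finset.mem_univ _))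
  -- positivity : 0 < x i
  have hstep0 : ∀ i : ZMod r, x i = 0 → x (i - 1) = 0 ∧ l (i - 1) = 0 := by
    intro i h
    have hc := hcyc (i - 1)
    rw [sub_add_cancel, h] at hc
    have h1 := hlb (i - 1)
    have h2 := hlnn (i - 1)
    constructor <;> linarith
  have hpos : ∀ i, 0 < x i := by
    by_contra hcon
    push_neg at hcon
    obtain ⟨i0, h0⟩ := hcon
    have hzero : x i0 = 0 := le_antisymm h0 (hlb i0)
    have allz : ∀ k : ℕ, x (i0 - (k : ZMod r)) = 0 := by
      intro k
      induction k with
      | zero => simpa using hzero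
      | succ k ih =>
        have h := (hstep0 _ ih).1
        have hidx : i0 - ((k : ZMod r)) - 1 = i0 - (((k+1 : ℕ)) : ZMod r) := by
          push_cast; ring
        rw [hidx] at h
        exact h
    have : l i₁ = 0 := by
      have h := (hstep0 _ (allz (i0 - 1 - i₁).val)).2
      have hv : (((i0 - 1 - i₁).val : ℕ) : ZMod r) = i0 - 1 - i₁ :=
        ZMod.natCast_rightInverse _
      rw [hv] at h
      have : i0 - (i0 - 1 - i₁) - 1 = i₁ := by ring
      rwa [this] at h
    exact hi₁ this
  have hpos1 : ∀ i, 1 ≤ x i := fun i => hpos i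
  -- congruence : m ∣ x (i - s) - g^s * x i
  have hcong : ∀ (i : ZMod r) (s : ℕ), (m : ℤ) ∣ x (i - (s : ZMod r)) - (g : ℤ) ^ s * x i := by
    intro i s
    induction s with
    | zero => simp
    | succ s ih =>
      have hc := hcyc (i - (((s+1 : ℕ)) : ZMod r))
      have hidx : (i - (((s+1 : ℕ)) : ZMod r)) + 1 = i - ((s : ℕ) : ZMod r) := by
        push_cast; ring
      rw [hidx] at hc
      have key : x (i - (((s+1 : ℕ)) : ZMod r)) - (g : ℤ) ^ (s+1) * x i
          = (g : ℤ) * (x (i - ((s : ℕ) : ZMod r)) - (g : ℤ) ^ s * x i)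
            - l (i - (((s+1 : ℕ)) : ZMod r)) := by
        rw [pow_succ]; linarith [hc]
      rw [key]
      exact dvd_sub (ih.mul_left _) (hldvd _)
  -- g^n ≡ -j (mod m) so  m ∣ x (i - n) + j * x i
  have hkey : ∀ i : ZMod r, (m : ℤ) ∣ x (i - (n : ZMod r)) + (j : ℤ) * x i := by
    intro i
    have h := hcong i n
    have : x (i - (n : ZMod r)) + (j : ℤ) * x i
        = (x (i - (n : ZMod r)) - (g : ℤ) ^ n * x i) + (m : ℤ) * x i := by
      rw [hmZ]; ring
    rw [this]
    exact dvd_add h (Dvd.intro _ rfl)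
  -- split on j = g - 1 or j ≤ g - 3
  have hsplit : (j : ℤ) = (g : ℤ) - 1 ∨ (j : ℤ) + 3 ≤ (g : ℤ) := by
    have hgm : g % 2 = 0 := Nat.even_iff.mp hge
    have hjm : j % 2 = 1 := Nat.odd_iff.mp hj
    have : j = g - 1 ∨ j + 3 ≤ g := by omega
    rcases this with h | h
    · left; have : (j : ℤ) = (g : ℤ) - 1 := by omega
      exact this
    · right; exact_mod_cast h
  rcases hsplit with hcase | hcase
  · -- Case B : j = g - 1, expansion argument
    set z : ℕ → ℤ := fun t => x ((0 : ZMod r) - ((t * n : ℕ) : ZMod r)) with hz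
    have hzdvd : ∀ t, (m : ℤ) ∣ z (t+1) + (j : ℤ) * z t := by
      intro t
      have h := hkey ((0 : ZMod r) - ((t * n : ℕ) : ZMod r))
      have hidx : ((0 : ZMod r) - ((t * n : ℕ) : ZMod r)) - ((n : ℕ) : ZMod r)
          = (0 : ZMod r) - (((t + 1) * n : ℕ) : ZMod r) := by
        push_cast; ring
      rw [hidx] at h
      exact h
    have hrec : ∀ t, z (t+1) = (m : ℤ) - ((g : ℤ) - 1) * z t := by
      intro t
      obtain ⟨c, hc⟩ := hzdvd t
      rw [hcase] at hc
      have h1 : 1 ≤ z (t+1) := hpos1 _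
      have h2 : 1 ≤ z t := hpos1 _
      have h3 : ((g : ℤ) - 1) * z (t+1) ≤ (m : ℤ) := hub _
      have h4 : ((g : ℤ) - 1) * z t ≤ (m : ℤ) := hub _
      have hzlt : z (t+1) < (m : ℤ) := by
        nlinarith [mul_nonneg (by linarith : (0:ℤ) ≤ (g : ℤ) - 2) (by linarith : (0:ℤ) ≤ z (t+1))]
      have hsum1 : 0 < z (t+1) + ((g : ℤ) - 1) * z t := by nlinarith
      have hsum2 : z (t+1) + ((g : ℤ) - 1) * z t < 2 * (m : ℤ) := by linarith
      rw [hc] at hsum1 hsum2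
      have hcval : c = 1 := by
        by_contra hne
        rcases lt_or_gt_of_ne hne with hlt | hgt
        · have hc0 : c ≤ 0 := by omega
          have hmp : (0:ℤ) ≤ (m : ℤ) := by linarith
          have := mul_nonpos_of_nonneg_of_nonpos hmp hc0
          linarith
        · have hc2 : (2:ℤ) ≤ c := by exact_mod_cast hgt
          have := mul_le_mul_of_nonneg_left hc2 (by linarith : (0:ℤ) ≤ (m : ℤ))
          linarith
      rw [hcval, mul_one] at hc
      linarith
    have hw : ∀ t, |(g : ℤ) * z t - (m : ℤ)| = ((g : ℤ) - 1) ^ t * |(g : ℤ) * z 0 - (m : ℤ)| := by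
      intro t
      induction t with
      | zero => simp
      | succ t ih =>
        have heq : (g : ℤ) * z (t+1) - (m : ℤ) = ((g : ℤ) - 1) * ((m : ℤ) - (g : ℤ) * z t) := by
          rw [hrec t]; ring
        rw [heq, abs_mul, abs_of_nonneg (by linarith : (0:ℤ) ≤ (g:ℤ) - 1),
          abs_sub_comm, ih, pow_succ]
        ring
    have hw0 : 1 ≤ |(g : ℤ) * z 0 - (m : ℤ)| := by
      rcases eq_or_ne ((g : ℤ) * z 0 - (m : ℤ)) 0 with h | h
      · exfalso
        have hdvdm : (g : ℤ) ∣ (m : ℤ) := ⟨z 0, by linarith⟩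
        have hdvdgn : (g : ℤ) ∣ (g : ℤ) ^ n := dvd_pow_self _ (by omega)
        have hdvdj : (g : ℤ) ∣ (j : ℤ) := by
          have := dvd_sub hdvdm hdvdgn
          rwa [hmZ, add_sub_cancel_left] at this
        have := Int.le_of_dvd (by linarith) hdvdj
        linarith
      · exact Int.one_le_abs (by omega)
    -- now derive contradiction
    set T : ℕ := (g + 1) * m with hT
    have hbT : |(g : ℤ) * z T - (m : ℤ)| ≤ ((g : ℤ) + 1) * (m : ℤ) := by
      have h1 : 1 ≤ z T := hpos1 _
      have h2 : ((g : ℤ) - 1) * z T ≤ (m : ℤ) := hub _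
      have hzm : z T ≤ (m : ℤ) := by
        nlinarith [mul_nonneg (by linarith : (0:ℤ) ≤ (g : ℤ) - 2) (by linarith : (0:ℤ) ≤ z T)]
      rw [abs_le]
      constructor
      · nlinarith
      · have : (g : ℤ) * z T ≤ (g : ℤ) * (m : ℤ) :=
          mul_le_mul_of_nonneg_left hzm (by linarith)
        linarith
    have hTlt : ((T : ℤ)) < 2 ^ T := by exact_mod_cast (Nat.lt_two_pow_self (n := T))
    have hple : (2 : ℤ) ^ T ≤ ((g : ℤ) - 1) ^ T := by
      apply pow_le_pow_left₀ (by norm_num) (by linarith)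
    have hTeq : ((T : ℤ)) = ((g : ℤ) + 1) * (m : ℤ) := by push_cast [hT]; ring
    have hchain : ((g : ℤ) - 1) ^ T ≤ ((g : ℤ) + 1) * (m : ℤ) := by
      calc ((g : ℤ) - 1) ^ T = ((g : ℤ) - 1) ^ T * 1 := by ring
        _ ≤ ((g : ℤ) - 1) ^ T * |(g : ℤ) * z 0 - (m : ℤ)| := by
            apply mul_le_mul_of_nonneg_left hw0 (pow_nonneg (by linarith) T)
        _ = |(g : ℤ) * z T - (m : ℤ)| := (hw T).symm
        _ ≤ ((g : ℤ) + 1) * (m : ℤ) := hbT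
    linarith
  · -- Case A : j ≤ g - 3, one-step contradiction
    have h := hkey 0
    set y := x ((0 : ZMod r) - ((n : ℕ) : ZMod r)) with hy
    set z0 := x (0 : ZMod r) with hz0
    have h1 : 1 ≤ y := hpos1 _
    have h2 : 1 ≤ z0 := hpos1 _
    have h3 : ((g : ℤ) - 1) * y ≤ (m : ℤ) := hub _
    have h4 : ((g : ℤ) - 1) * z0 ≤ (m : ℤ) := hub _
    have hdpos : 0 < y + (j : ℤ) * z0 := by nlinarith
    have hdlt : y + (j : ℤ) * z0 < (m : ℤ) := by
      have e1 : (j : ℤ) * (((g : ℤ) - 1) * z0) ≤ (j : ℤ) * (m : ℤ) :=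
        mul_le_mul_of_nonneg_left h4 (by linarith)
      have e2 : ((j : ℤ) + 1) * (m : ℤ) ≤ ((g : ℤ) - 2) * (m : ℤ) :=
        mul_le_mul_of_nonneg_right (by linarith) (by linarith)
      nlinarith
    have := Int.le_of_dvd hdpos h
    linarith
end

section
/- Let p be a prime with p > g-1. If the multiplicative order of g modulo p^n is even, then p^n is complete. If g is a perfect square, then p^n is complete regardless of the parity of the order. -/
/-- only ±1 square roots of 1 mod odd prime power -/
lemma sq_one (p n : ℕ) (hp : p.Prime) (hp2 : p ≠ 2) (hn : 1 ≤ n)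
    (y : ZMod (p^n)) (hy : y^2 = 1) : y = 1 ∨ y = -1 := by
  haveI : NeZero (p^n) := ⟨pow_ne_zero _ hp.ne_zero⟩
  obtain ⟨A, rfl⟩ := ZMod.intCast_surjective y
  have hdvd : ((p^n : ℕ) : ℤ) ∣ (A - 1) * (A + 1) := by
    rw [← ZMod.intCast_zmod_eq_zero_iff_dvd]
    push_cast
    have : ((A:ZMod (p^n)))^2 - 1 = 0 := by rw [hy]; ring
    push_cast at this
    linear_combination this
  have hP : Prime (p : ℤ) := Nat.prime_iff_prime_int.mp hp
  have hpn : ((p^n : ℕ) : ℤ) = (p:ℤ)^n := by push_cast; ring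
  rw [hpn] at hdvd
  have hpd : (p:ℤ) ∣ (A - 1) * (A + 1) := dvd_trans (dvd_pow_self _ (by omega)) hdvd
  have h2 : ¬ ((p:ℤ) ∣ A - 1 ∧ (p:ℤ) ∣ A + 1) := by
    rintro ⟨h1, h2⟩
    have hd2 : (p:ℤ) ∣ 2 := by have := dvd_sub h2 h1; simpa using this
    have : (p:ℕ) ∣ 2 := by exact_mod_cast hd2
    have := (Nat.prime_dvd_prime_iff_eq hp Nat.prime_two).mp this
    exact hp2 this
  rcases hP.dvd_mul.mp hpd with h | h
  · left
    have hcop : IsCoprime ((p:ℤ)^n) (A + 1) := by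
      apply IsCoprime.pow_left
      rw [hP.coprime_iff_not_dvd]  -- name guess
      tauto
    have : ((p:ℤ)^n) ∣ A - 1 := hcop.dvd_of_dvd_mul_right hdvd
    rw [← hpn] at this
    rw [← sub_eq_zero]
    rw [show ((A:ZMod (p^n)) - 1 : ZMod (p^n)) = ((A - 1 : ℤ) : ZMod (p^n)) by push_cast; ring]
    rwa [ZMod.intCast_zmod_eq_zero_iff_dvd]
  · right
    have h1 : ¬ (p:ℤ) ∣ A - 1 := by tauto
    have hcop : IsCoprime ((p:ℤ)^n) (A - 1) := by
      apply IsCoprime.pow_left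
      rw [hP.coprime_iff_not_dvd]
      tauto
    have : ((p:ℤ)^n) ∣ A + 1 := by
      have := hcop.dvd_of_dvd_mul_left (by rwa [mul_comm] at hdvd)
      exact this
    rw [← hpn] at this
    rw [← sub_eq_zero]
    rw [show ((A:ZMod (p^n)) - (-1) : ZMod (p^n)) = ((A + 1 : ℤ) : ZMod (p^n)) by push_cast; ring]
    rwa [ZMod.intCast_zmod_eq_zero_iff_dvd]

/-- core contradiction: a coset-like set with small lifts, closed under mult by g,
containing a unit, while some a ≡ g^s with magnitude conditions. -/
lemma core (g m : ℕ) (hg : 4 ≤ g) (hm : 1 < m)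
    (Ξ : Set (ZMod m)) (hclosed : ∀ z ∈ Ξ, (g : ZMod m) * z ∈ Ξ)
    (hbound : ∀ z ∈ Ξ, (g - 1) * z.val < m)
    (z₀ : ZMod m) (hz₀ : z₀ ∈ Ξ) (hu : IsUnit z₀)
    (a : ℤ) (s : ℕ) (ha : (g : ZMod m)^s = (a : ZMod m))
    (hau : IsUnit ((a : ℤ) : ZMod m))
    (hcase : (a ≤ -1 ∧ -a ≤ (g:ℤ) - 2) ∨ (2 ≤ a ∧ a ≤ (g:ℤ) - 2)) : False := by
  haveI : NeZero m := ⟨by omega⟩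
  haveI : Fact (1 < m) := ⟨hm⟩
  have hgs : ∀ z ∈ Ξ, ∀ t : ℕ, (g : ZMod m)^t * z ∈ Ξ := by
    intro z hz t
    induction t with
    | zero => simpa using hz
    | succ t ih =>
      have := hclosed _ ih
      rw [pow_succ]
      rw [show (g : ZMod m)^t * (g:ZMod m) * z = (g:ZMod m) * ((g:ZMod m)^t * z) by ring]
      exact this
  have hA : ∀ z ∈ Ξ, ((a : ℤ) : ZMod m) * z ∈ Ξ := by
    intro z hz; rw [← ha]; exact hgs z hz s
  -- val of nonzero unit is ≥ 1
  have hvpos : ∀ z : ZMod m, IsUnit z → 1 ≤ z.val := by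
    intro z hz
    rcases Nat.eq_zero_or_pos z.val with h | h
    · exfalso
      rw [ZMod.val_eq_zero] at h
      subst h
      simp [isUnit_zero_iff] at hz
    · exact h
  -- multiplication by small natural e: val multiplies
  have hmul : ∀ (e : ℕ) (z : ZMod m), 1 ≤ e → e ≤ g - 2 → z ∈ Ξ → IsUnit z →
      ((e : ZMod m) * z).val = e * z.val := by
    intro e z he heg hz hzu
    have hv1 : 1 ≤ z.val := hvpos z hzu
    have hvb : (g - 1) * z.val < m := hbound z hz
    have hlt : e * z.val < m := by
      have : e * z.val ≤ (g-1) * z.val := Nat.mul_le_mul_right _ (by omega)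
      omega
    conv_lhs => rw [show z = ((z.val : ℕ) : ZMod m) from (ZMod.natCast_rightInverse z).symm]
    rw [← Nat.cast_mul, ZMod.val_cast_of_lt hlt]
  rcases hcase with ⟨ha1, ha2⟩ | ⟨ha1, ha2⟩
  · -- negative case
    obtain ⟨e, hae⟩ : ∃ e : ℕ, a = -(e:ℤ) := ⟨(-a).toNat, by omega⟩
    have he1 : 1 ≤ e := by omega
    have heg : e ≤ g - 2 := by omega
    set z := z₀
    have hv1 : 1 ≤ z.val := hvpos z hu
    have hvb : (g - 1) * z.val < m := hbound z hz₀
    have hlt : e * z.val < m := by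
      have : e * z.val ≤ (g-1) * z.val := Nat.mul_le_mul_right _ (by omega)
      omega
    have hval : (((e:ℕ):ZMod m) * z).val = e * z.val := hmul e z he1 heg hz₀ hu
    have hw : ((a : ℤ) : ZMod m) * z ∈ Ξ := hA z hz₀
    have hcast : ((a:ℤ) : ZMod m) = -((e:ℕ) : ZMod m) := by rw [hae]; push_cast; ring
    have hwne : ((e:ℕ):ZMod m) * z ≠ 0 := by
      intro h
      rw [← ZMod.val_eq_zero, hval] at h
      exact absurd h (Nat.mul_ne_zero (by omega) (by omega))
    have hwval : (((a:ℤ):ZMod m) * z).val = m - e * z.val := by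
      rw [hcast, neg_mul, ZMod.neg_val, if_neg hwne, hval]
    have := hbound _ hw
    rw [hwval] at this
    -- (g-1) * (m - e*z.val) < m with e*z.val ≤ (g-2)*z.val and (g-1)*z.val < m
    have h1 : e * z.val ≤ (g-2) * z.val := Nat.mul_le_mul_right _ heg
    have h3 : (g-1) * z.val < m := hvb
    zify [hlt.le, (show (1:ℕ) ≤ g by omega), (show (2:ℕ) ≤ g by omega)] at this h1 h3
    nlinarith [mul_le_mul_of_nonneg_left h1 (by push_cast; linarith : (0:ℤ) ≤ (g:ℤ)-1),
      mul_lt_mul_of_pos_left h3 (by push_cast; linarith : (0:ℤ) < (g:ℤ)-2)]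
  · -- positive case
    obtain ⟨e, hae⟩ : ∃ e : ℕ, a = (e:ℤ) := ⟨a.toNat, by omega⟩
    have he1 : 2 ≤ e := by omega
    have heg : e ≤ g - 2 := by omega
    have hcast : ((a:ℤ) : ZMod m) = ((e:ℕ) : ZMod m) := by rw [hae]; push_cast; ring
    have key : ∀ t : ℕ, ∃ z ∈ Ξ, IsUnit z ∧ 2^t ≤ z.val := by
      intro t
      induction t with
      | zero => exact ⟨z₀, hz₀, hu, hvpos z₀ hu⟩
      | succ t ih =>
        obtain ⟨z, hz, hzu, hzv⟩ := ih
        refine ⟨((a:ℤ):ZMod m) * z, hA z hz, hau.mul hzu, ?_⟩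
        rw [hcast, hmul e z (by omega) heg hz hzu]
        calc 2^(t+1) = 2 * 2^t := by ring
        _ ≤ e * z.val := Nat.mul_le_mul he1 hzv
    obtain ⟨z, hz, hzu, hzv⟩ := key m
    have := ZMod.val_lt z
    have := Nat.lt_two_pow_self (n := m)
    omega

lemma cycle_bounds (g m r : ℕ) (hg : 4 ≤ g) (x l : ZMod r → ℤ)
    (hc : IsCycle g m r x l) :
    (∀ i, 0 ≤ x i) ∧ (∀ i, ((g:ℤ) - 1) * x i ≤ (m:ℤ)) := by
  obtain ⟨hr, hl, hrec⟩ := hc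
  haveI : NeZero r := ⟨hr.ne'⟩
  have hl0 : ∀ i, 0 ≤ l i := by
    intro i; rcases hl i with h | h <;> rw [h] <;> positivity
  have hlm : ∀ i, l i ≤ (m:ℤ) := by
    intro i; rcases hl i with h | h
    · rw [h]; positivity
    · rw [h]
  have hrec' : ∀ j, (g:ℤ) * x j = x (j - 1) + l (j - 1) := by
    intro j
    have := hrec (j - 1)
    rwa [sub_add_cancel] at this
  constructor
  · -- min nonneg
    obtain ⟨j, -, hj⟩ := Finset.exists_min_image Finset.univ x ⟨0, Finset.mem_univ 0⟩
    have h1 : (g:ℤ) * x j = x (j-1) + l (j-1) := hrec' j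
    have h2 : x j ≤ x (j - 1) := hj _ (Finset.mem_univ _)
    have h3 : 0 ≤ l (j-1) := hl0 _
    have hxj : 0 ≤ x j := by nlinarith [hj]
    intro i
    exact le_trans hxj (hj i (Finset.mem_univ i))
  · -- max bound
    obtain ⟨j, -, hj⟩ := Finset.exists_max_image Finset.univ x ⟨0, Finset.mem_univ 0⟩
    have h1 : (g:ℤ) * x j = x (j-1) + l (j-1) := hrec' j
    have h2 : x (j-1) ≤ x j := hj _ (Finset.mem_univ _)
    have h3 : l (j-1) ≤ (m:ℤ) := hlm _
    have hxj : ((g:ℤ) - 1) * x j ≤ (m:ℤ) := by nlinarith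
    intro i
    have hxi : x i ≤ x j := hj i (Finset.mem_univ i)
    have hg1 : (0:ℤ) ≤ (g:ℤ) - 1 := by
      have : (4:ℤ) ≤ (g:ℤ) := by exact_mod_cast hg
      linarith
    nlinarith

def Hyp (g p n : ℕ) : Prop :=
  ∃ (s : ℕ) (a : ℤ), ((g : ZMod (p^n)))^s = (a : ZMod (p^n)) ∧
    ((a ≤ -1 ∧ -a ≤ (g:ℤ) - 2) ∨ (2 ≤ a ∧ a ≤ (g:ℤ) - 2))

lemma no_cycle (g p : ℕ) (hg4 : 4 ≤ g) (hp : p.Prime) (hpg : g - 1 < p)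
    (hgp : ¬ p ∣ g) :
    ∀ n : ℕ, Hyp g p n → ∀ r (x l : ZMod r → ℤ), ¬ IsNontrivialCycle g (p^n) r x l := by
  have hp5 : 5 ≤ p := by
    rcases Nat.lt_or_ge p 5 with h | h
    · interval_cases p <;> simp_all <;> omega
    · exact h
  intro n
  induction n with
  | zero =>
    intro _ r x l ⟨hc, i, hi⟩
    obtain ⟨hnn, hub⟩ := cycle_bounds g 1 r hg4 x l hc
    have hx0 : ∀ j, x j = 0 := by
      intro j
      have h1 := hnn j
      have h2 := hub j
      have hg' : (4:ℤ) ≤ (g:ℤ) := by exact_mod_cast hg4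
      push_cast at h2
      have h4 : 3 * x j ≤ ((g:ℤ)-1) * x j := mul_le_mul_of_nonneg_right (by linarith) h1
      omega
    obtain ⟨-, -, hrec⟩ := hc
    have := hrec i
    rw [hx0 i, hx0 (i+1)] at this
    simp at this
    exact hi this.symm
  | succ n ih =>
    intro hyp r x l ⟨hc, i₀nt, hi₀nt⟩
    obtain ⟨hr, hl, hrec⟩ := hc
    haveI : NeZero r := ⟨hr.ne'⟩
    set m := p^(n+1) with hm
    have hmpos : 1 < m := by
      calc 1 < p := by omega
      _ ≤ p^(n+1) := Nat.le_self_pow (by omega) p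
    haveI : NeZero m := ⟨by omega⟩
    obtain ⟨hnn, hub⟩ := cycle_bounds g m r hg4 x l ⟨hr, hl, hrec⟩
    have hpZ : (0:ℤ) < (p:ℤ) := by exact_mod_cast (by omega : 0 < p)
    by_cases hall : ∀ i, (p:ℤ) ∣ x i
    · -- divide everything by p
      have hpl : ∀ i, (p:ℤ) ∣ l i := by
        intro i
        rcases hl i with h | h
        · rw [h]; exact dvd_zero _
        · rw [h, hm]
          push_cast
          exact dvd_pow_self _ (Nat.succ_ne_zero n)
      set x' : ZMod r → ℤ := fun i => x i / p with hx'
      set l' : ZMod r → ℤ := fun i => l i / p with hl'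
      have hxx : ∀ i, (p:ℤ) * x' i = x i := fun i => Int.mul_ediv_cancel' (hall i)
      have hll : ∀ i, (p:ℤ) * l' i = l i := fun i => Int.mul_ediv_cancel' (hpl i)
      apply ih ?_ r x' l'
      · refine ⟨⟨hr, ?_, ?_⟩, ?_⟩
        · intro i
          rcases hl i with h | h
          · left
            have h2 := hll i
            rw [h] at h2
            rcases mul_eq_zero.mp h2 with h' | h'
            · exact absurd h' (by positivity)
            · exact h'
          · right
            have h2 := hll i
            rw [h] at h2
            have : (p:ℤ) * ((p^n:ℕ):ℤ) = ((p^(n+1):ℕ):ℤ) := by push_cast; ring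
            have := mul_left_cancel₀ hpZ.ne' (h2.trans (by rw [← this]))
            exact this
        · intro i
          apply mul_left_cancel₀ hpZ.ne'
          have e1 : (p:ℤ) * ((g:ℤ) * x' (i+1)) = (g:ℤ) * ((p:ℤ) * x' (i+1)) := by ring
          rw [e1, hxx, hrec i, mul_add, hxx, hll]
        · refine ⟨i₀nt, ?_⟩
          intro h0
          apply hi₀nt
          rw [← hll i₀nt, h0, mul_zero]
      · -- transport Hyp down
        obtain ⟨s, a, hsa, hca⟩ := hyp
        refine ⟨s, a, ?_, hca⟩
        have hdvd : p^n ∣ p^(n+1) := pow_dvd_pow p (Nat.le_succ n)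
        have h2 := congrArg (ZMod.castHom hdvd (ZMod (p^n))) hsa
        rw [map_pow, map_natCast, map_intCast] at h2
        exact h2
    · -- exists non-divisible: core argument
      push_neg at hall
      obtain ⟨i₀, hi₀⟩ := hall
      have hnd : ¬ (g - 1) ∣ m := by
        intro hdv
        obtain ⟨k, hk, he⟩ := (Nat.dvd_prime_pow hp).mp hdv
        rcases Nat.eq_zero_or_pos k with h | h
        · rw [h, pow_zero] at he; omega
        · have : p ∣ g - 1 := he ▸ dvd_pow_self p h.ne'
          have := Nat.le_of_dvd (by omega) this
          omega
      -- basic integer facts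
      have hxlt : ∀ i, x i < (m:ℤ) := by
        intro i
        have h1 := hnn i
        have h2 := hub i
        have hg' : (4:ℤ) ≤ (g:ℤ) := by exact_mod_cast hg4
        nlinarith
      set ξ : ZMod r → ZMod m := fun i => ((x i : ℤ) : ZMod m) with hξ
      have hval : ∀ i, (ξ i).val = (x i).toNat := by
        intro i
        have he : ξ i = (((x i).toNat : ℕ) : ZMod m) := by
          rw [hξ]
          simp only
          rw [← Int.cast_natCast, Int.toNat_of_nonneg (hnn i)]
        rw [he, ZMod.val_cast_of_lt]
        have h1 := hxlt i
        have h2 := hnn i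
        omega
      have hrec' : ∀ j, (g:ℤ) * x j = x (j - 1) + l (j - 1) := by
        intro j
        have := hrec (j - 1)
        rwa [sub_add_cancel] at this
      have hclosed : ∀ z ∈ Set.range ξ, (g : ZMod m) * z ∈ Set.range ξ := by
        rintro z ⟨j, rfl⟩
        refine ⟨j - 1, ?_⟩
        have h := congrArg (fun t : ℤ => (t : ZMod m)) (hrec' j)
        push_cast at h
        have hlz : ((l (j-1) : ℤ) : ZMod m) = 0 := by
          rcases hl (j-1) with hc2 | hc2
          · rw [hc2]; push_cast; ring
          · rw [hc2]; exact_mod_cast ZMod.natCast_self m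
        rw [hlz, add_zero] at h
        exact h.symm
      have hbound' : ∀ z ∈ Set.range ξ, (g - 1) * z.val < m := by
        rintro z ⟨j, rfl⟩
        rw [hval j]
        have h1 := hub j
        have h2 := hnn j
        have hle : (g - 1) * (x j).toNat ≤ m := by
          have hc : (((g-1) * (x j).toNat : ℕ) : ℤ) ≤ (m:ℤ) := by
            push_cast [Nat.cast_sub (by omega : 1 ≤ g)]
            rw [Int.toNat_of_nonneg h2]
            exact h1
          exact_mod_cast hc
        rcases Nat.lt_or_ge ((g-1) * (x j).toNat) m with h | h
        · exact h
        · exfalso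
          have heq : (g - 1) * (x j).toNat = m := le_antisymm hle h
          exact hnd ⟨(x j).toNat, heq.symm⟩
      have hunit : IsUnit (ξ i₀) := by
        have hcop : ((x i₀).toNat).Coprime m := by
          apply Nat.Coprime.pow_right
          rw [Nat.coprime_comm]
          rw [hp.coprime_iff_not_dvd]
          intro hdvd
          apply hi₀
          rw [show x i₀ = ((x i₀).toNat : ℤ) from (Int.toNat_of_nonneg (hnn i₀)).symm]
          exact_mod_cast Int.natCast_dvd_natCast.mpr hdvd
        have he : ξ i₀ = (((x i₀).toNat : ℕ) : ZMod m) := by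
          have := hval i₀
          conv_lhs => rw [show ξ i₀ = (((ξ i₀).val : ℕ) : ZMod m) from (ZMod.natCast_rightInverse (ξ i₀)).symm]
          rw [this]
        rw [he]
        exact (ZMod.isUnit_iff_coprime _ m).mpr hcop
      obtain ⟨s, a, hsa, hca⟩ := hyp
      have hgu : IsUnit ((g:ℕ) : ZMod m) := by
        apply (ZMod.isUnit_iff_coprime g m).mpr
        apply Nat.Coprime.pow_right
        rw [Nat.coprime_comm, hp.coprime_iff_not_dvd]
        exact hgp
      have hau : IsUnit ((a : ℤ) : ZMod m) := by
        rw [← hsa]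
        exact hgu.pow s
      exact core g m hg4 hmpos (Set.range ξ) hclosed hbound' (ξ i₀)
        (Set.mem_range_self i₀) hunit a s hsa hau hca

theorem stmt11 (g p n : ℕ) (hg4 : 4 ≤ g) (hge : Even g)
    (hp : p.Prime) (hpg : g - 1 < p) (hn : 1 ≤ n) :
    (Even (orderOf ((g : ZMod (p ^ n)))) → Complete g (p ^ n)) ∧
      (IsSquare g → Complete g (p ^ n)) := by
  have hp4 : p ≠ 4 := by rintro rfl; norm_num at hp
  have hp5 : 5 ≤ p := by omega
  have hp2 : p ≠ 2 := by omega
  have hgp : ¬ p ∣ g := by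
    intro hdvd
    have h1 : p ≤ g := Nat.le_of_dvd (by omega) hdvd
    have h2 : p = g := by omega
    obtain ⟨w, hw⟩ := hge
    have : 2 ∣ p := by omega
    have := (Nat.Prime.eq_one_or_self_of_dvd hp 2 this)
    omega
  haveI : NeZero (p^n) := ⟨pow_ne_zero _ (by omega)⟩
  have hgcop : (g : ℕ).Coprime (p^n) := by
    apply Nat.Coprime.pow_right
    rw [Nat.coprime_comm, hp.coprime_iff_not_dvd]
    exact hgp
  have hcompl : Hyp g p n → Complete g (p^n) := by
    rintro h ⟨r, x, l, hcyc⟩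
    exact no_cycle g p hg4 hp hpg hgp n h r x l hcyc
  have hgu : IsUnit ((g:ℕ) : ZMod (p^n)) := (ZMod.isUnit_iff_coprime g (p^n)).mpr hgcop
  obtain ⟨ug, hug⟩ := hgu
  have hg4' : (4:ℤ) ≤ (g:ℤ) := by exact_mod_cast hg4
  have part1 : Even (orderOf ((g : ZMod (p ^ n)))) → Complete g (p ^ n) := by
    intro hev
    apply hcompl
    set d := orderOf ((g : ZMod (p^n))) with hd
    have hdpos : 0 < d := by
      rw [hd, ← hug, orderOf_units]
      exact orderOf_pos ug
    obtain ⟨t, ht⟩ := hev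
    have ht1 : 1 ≤ t := by omega
    have hc2 : (((g:ℕ):ZMod (p^n))^t)^2 = 1 := by
      rw [← pow_mul, show t*2 = d by omega, hd]
      exact pow_orderOf_eq_one _
    have hne : ((g:ℕ):ZMod (p^n))^t ≠ 1 := by
      intro h
      have hdvd : d ∣ t := hd ▸ orderOf_dvd_iff_pow_eq_one.mpr h
      have := Nat.le_of_dvd ht1 hdvd
      omega
    rcases sq_one p n hp hp2 hn _ hc2 with h | h
    · exact absurd h hne
    · exact ⟨t, -1, by rw [h]; push_cast; ring, Or.inl ⟨le_refl _, by linarith⟩⟩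
  refine ⟨part1, ?_⟩
  rintro ⟨k, hk⟩
  have hk2 : 2 ≤ k := by nlinarith
  have hpk : ¬ p ∣ k := by
    intro h
    exact hgp (hk ▸ h.mul_right k)
  have hkcop : (k : ℕ).Coprime (p^n) := by
    apply Nat.Coprime.pow_right
    rw [Nat.coprime_comm, hp.coprime_iff_not_dvd]
    exact hpk
  have hku : IsUnit ((k:ℕ) : ZMod (p^n)) := (ZMod.isUnit_iff_coprime k (p^n)).mpr hkcop
  obtain ⟨uk, huk⟩ := hku
  set D := orderOf ((k:ℕ):ZMod (p^n)) with hD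
  have hDu : D = orderOf uk := by rw [hD, ← huk, orderOf_units]
  have hDpos : 0 < D := hDu ▸ orderOf_pos uk
  have hgK : ((g:ℕ) : ZMod (p^n)) = ((k:ℕ):ZMod (p^n))^2 := by
    rw [hk]; push_cast; ring
  have hkD : ((k:ℕ):ZMod (p^n))^D = 1 := hD ▸ pow_orderOf_eq_one _
  have hkg2 : (k:ℤ) ≤ (g:ℤ) - 2 := by
    have : (k:ℤ) * (k:ℤ) = (g:ℤ) := by exact_mod_cast hk.symm
    have hk2' : (2:ℤ) ≤ (k:ℤ) := by exact_mod_cast hk2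
    nlinarith
  rcases Nat.even_or_odd D with hDe | hDo
  · -- D even
    obtain ⟨T, hT⟩ := hDe
    have hT1 : 1 ≤ T := by omega
    have hc2 : (((k:ℕ):ZMod (p^n))^T)^2 = 1 := by
      rw [← pow_mul, show T*2 = D by omega]
      exact hkD
    have hne : ((k:ℕ):ZMod (p^n))^T ≠ 1 := by
      intro h
      have hdvd : D ∣ T := hD ▸ orderOf_dvd_iff_pow_eq_one.mpr h
      have := Nat.le_of_dvd hT1 hdvd
      omega
    have hct : ((k:ℕ):ZMod (p^n))^T = -1 := by
      rcases sq_one p n hp hp2 hn _ hc2 with h | h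
      · exact absurd h hne
      · exact h
    rcases Nat.even_or_odd T with hTe | hTo
    · -- orderOf g = T even, apply part1
      apply part1
      have he1 : (g : ZMod (p^n)) = ↑(uk^2) := by
        rw [hgK, ← huk]; push_cast; ring
      rw [he1, orderOf_units, orderOf_pow]
      have hgcd : Nat.gcd (orderOf uk) 2 = 2 := by
        apply Nat.gcd_eq_right
        rw [← hDu]
        omega
      rw [hgcd, ← hDu]
      obtain ⟨c, hc⟩ := hTe
      exact ⟨c, by omega⟩
    · -- T odd : -k = g^((T+1)/2)
      obtain ⟨c, hc⟩ := hTo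
      apply hcompl
      refine ⟨c+1, -(k:ℤ), ?_, Or.inl ⟨by omega, by push_cast; linarith⟩⟩
      rw [hgK, ← pow_mul, show 2*(c+1) = T + 1 by omega, pow_succ, hct]
      push_cast
      ring
  · -- D odd : k = g^((D+1)/2)
    obtain ⟨c, hc⟩ := hDo
    apply hcompl
    refine ⟨c+1, (k:ℤ), ?_, Or.inr ⟨by exact_mod_cast hk2, hkg2⟩⟩
    rw [hgK, ← pow_mul, show 2*(c+1) = D + 1 by omega, pow_succ, hkD]
    push_cast
    ring
end

section
/- If m is a primitive number for scale g, then gcd(m,g) = 1. -/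
theorem stmt13 (g m : ℕ) (hg4 : 4 ≤ g) (hge : Even g) (hm : Odd m)
    (h : Primitive g m) : Nat.Coprime m g := by
  by_contra hcop
  set d := Nat.gcd m g with hdd
  have hm1 : 1 ≤ m := hm.pos
  have hdm : d ∣ m := Nat.gcd_dvd_left _ _
  have hdg : d ∣ g := Nat.gcd_dvd_right _ _
  have hd1 : 2 ≤ d := by
    have h1 : d ≠ 1 := hcop
    have h2 : 0 < d := Nat.gcd_pos_of_pos_left g (by omega)
    omega
  have hd0 : (d : ℤ) ≠ 0 := by positivity
  obtain ⟨r, x, l, ⟨⟨hr, hl, hx⟩, i0, hi0⟩⟩ := h.1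
  have hdl : ∀ i, (d : ℤ) ∣ l i := by
    intro i
    rcases hl i with h0 | h0
    · simp [h0]
    · rw [h0]; exact_mod_cast Int.natCast_dvd_natCast.2 hdm
  have hdx : ∀ i, (d : ℤ) ∣ x i := by
    intro i
    have hxi : x i = (g : ℤ) * x (i + 1) - l i := by linarith [hx i]
    rw [hxi]
    exact dvd_sub ((Int.natCast_dvd_natCast.2 hdg).mul_right _) (hdl i)
  have hmd : m / d ∣ m := ⟨d, (Nat.div_mul_cancel hdm).symm⟩
  have hmdne : m / d ≠ m := Nat.ne_of_lt (Nat.div_lt_self (by omega) hd1)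
  refine h.2 (m / d) hmd hmdne ⟨r, fun i => x i / d, fun i => l i / d, ⟨hr, ?_, ?_⟩, i0, ?_⟩
  · intro i
    rcases hl i with h0 | h0
    · left; simp [h0]
    · right; show l i / (d:ℤ) = _; rw [h0, Int.natCast_ediv]
  · intro i
    obtain ⟨a, ha⟩ := hdx i
    obtain ⟨b, hb⟩ := hdl i
    obtain ⟨c, hc⟩ := hdx (i + 1)
    have key := hx i
    show (g:ℤ) * (x (i+1) / d) = x i / d + l i / d
    rw [ha, hb, hc] at key ⊢
    rw [Int.mul_ediv_cancel_left _ hd0, Int.mul_ediv_cancel_left _ hd0,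
      Int.mul_ediv_cancel_left _ hd0]
    have h2 : (d : ℤ) * ((g : ℤ) * c) = (d : ℤ) * (a + b) := by ring_nf; ring_nf at key; linarith
    exact mul_left_cancel₀ hd0 h2
  · have h0 : l i0 = (m : ℤ) := (hl i0).resolve_left hi0
    show l i0 / (d:ℤ) ≠ 0
    rw [h0, ← Int.natCast_ediv]
    have hpos : 0 < m / d := Nat.div_pos (Nat.le_of_dvd hm1 hdm) (by omega)
    exact_mod_cast hpos.ne'
end

section
/- There are infinitely many primitive numbers for any even scale g ≥ 4. -/
open Finset

section Aux

lemma sum_val_eq {p : ℕ} [NeZero p] (f : ℕ → ℤ) :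
    ∑ k : ZMod p, f (ZMod.val k) = ∑ j ∈ range p, f j := by
  refine Finset.sum_nbij' (fun k => ZMod.val k) (fun j => (j : ZMod p)) ?_ ?_ ?_ ?_ ?_
  · intro k _; exact mem_range.mpr (ZMod.val_lt k)
  · intro j _; exact mem_univ _
  · intro k _; exact ZMod.natCast_rightInverse k
  · intro j hj; exact ZMod.val_cast_of_lt (mem_range.mp hj)
  · intro k _; rfl

lemma val_sub_one {p : ℕ} [NeZero p] (d : ZMod p) (hd : d ≠ 0) :
    (d - 1).val + 1 = d.val := by
  have h1 : 1 ≤ d.val := Nat.one_le_iff_ne_zero.mpr (fun h => hd ((ZMod.val_eq_zero d).mp h))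
  have : d - 1 = ((d.val - 1 : ℕ) : ZMod p) := by
    rw [Nat.cast_sub h1, ZMod.natCast_rightInverse d]
    push_cast; ring
  rw [this, ZMod.val_cast_of_lt (lt_of_le_of_lt (Nat.sub_le _ _) (ZMod.val_lt d))]
  omega

lemma val_neg_one' {p : ℕ} [NeZero p] : ((0 - 1 : ZMod p)).val + 1 = p := by
  have hp : 0 < p := Nat.pos_of_ne_zero (NeZero.ne p)
  have : (0 - 1 : ZMod p) = ((p - 1 : ℕ) : ZMod p) := by
    rw [Nat.cast_sub hp, ZMod.natCast_self]
    push_cast; ring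
  rw [this, ZMod.val_cast_of_lt (by omega)]
  omega

/-- The repunit `∑ i < p, g^i` is incomplete: the cycle comes from the cyclic word of length
`p` with `g - 1` ones. -/
lemma incomplete_geom (g p : ℕ) (hg : 4 ≤ g) (hgp : g ≤ p) :
    Incomplete g (∑ i ∈ range p, g ^ i) := by
  have hp0 : 0 < p := by omega
  haveI : NeZero p := ⟨by omega⟩
  set m : ℕ := ∑ i ∈ range p, g ^ i with hm
  set a : ZMod p → ℤ := fun k => if k.val < g - 1 then 1 else 0 with ha
  set T : ZMod p → ℤ := fun i => ∑ k : ZMod p, (g:ℤ)^((k - i).val) * a k with hT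
  have hmZ : (m : ℤ) = ∑ i ∈ range p, (g:ℤ)^i := by rw [hm]; push_cast; rfl
  have hgm : ((g:ℤ) - 1) * (m:ℤ) = (g:ℤ)^p - 1 := by rw [hmZ, mul_comm, geom_sum_mul]
  have hsum_a : ∑ k : ZMod p, a k = (g:ℤ) - 1 := by
    rw [ha]
    rw [sum_val_eq (p := p) (fun j => if j < g - 1 then (1:ℤ) else 0)]
    rw [← Finset.sum_subset (range_subset_range.mpr (by omega : g - 1 ≤ p))
        (fun x _ hx => if_neg (fun h => hx (mem_range.mpr h)))]
    rw [Finset.sum_congr rfl (fun x hx => if_pos (mem_range.mp hx))]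
    simp only [sum_const, card_range, nsmul_eq_mul, mul_one]
    push_cast [Nat.cast_sub (by omega : 1 ≤ g)]
    ring
  have hdvd : ∀ i, ((g:ℤ) - 1) ∣ T i := by
    intro i
    have h1 : T i = (∑ k : ZMod p, ((g:ℤ)^((k - i).val) - 1) * a k) + ∑ k : ZMod p, a k := by
      rw [hT, ← Finset.sum_add_distrib]
      exact Finset.sum_congr rfl (fun k _ => by ring)
    rw [h1, hsum_a]
    refine dvd_add (Finset.dvd_sum fun k _ => Dvd.dvd.mul_right ?_ _) dvd_rfl
    simpa using sub_dvd_pow_sub_pow (g:ℤ) 1 ((k - i).val)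
  have hshift : ∀ i, (g:ℤ) * T (i+1) = T i + ((g:ℤ)^p - 1) * a i := by
    intro i
    have key : ∑ k : ZMod p, ((g:ℤ)^((k - (i+1)).val + 1) - (g:ℤ)^((k - i).val)) * a k
        = ((g:ℤ)^p - 1) * a i := by
      rw [Finset.sum_eq_single i]
      · have h1 : (i - (i+1) : ZMod p) = 0 - 1 := by ring
        have h2 : (i - i : ZMod p) = 0 := by ring
        rw [h1, h2]
        rw [val_neg_one']
        simp [ZMod.val_zero]
      · intro k _ hk
        have hd : (k - i : ZMod p) ≠ 0 := sub_ne_zero.mpr hk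
        have h3 : (k - (i+1) : ZMod p) = (k - i) - 1 := by ring
        rw [h3, val_sub_one _ hd, sub_self, zero_mul]
      · intro h; exact absurd (mem_univ i) h
    have expand : (g:ℤ) * T (i+1) - T i
        = ∑ k : ZMod p, ((g:ℤ)^((k - (i+1)).val + 1) - (g:ℤ)^((k - i).val)) * a k := by
      rw [hT, Finset.mul_sum, ← Finset.sum_sub_distrib]
      exact Finset.sum_congr rfl (fun k _ => by rw [pow_succ]; ring)
    have := expand.trans key
    linarith
  have hg1 : ((g:ℤ) - 1) ≠ 0 := by
    have : (4:ℤ) ≤ (g:ℤ) := by exact_mod_cast hg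
    linarith
  have hx : ∀ j, ((g:ℤ)-1) * (T j / ((g:ℤ)-1)) = T j := fun j => Int.mul_ediv_cancel' (hdvd j)
  refine ⟨p, fun i => T i / ((g:ℤ)-1), fun k => (m:ℤ) * a k, ⟨⟨hp0, ?_, ?_⟩, ?_⟩⟩
  · intro i
    by_cases h : i.val < g - 1
    · right; rw [ha]; simp [h]
    · left; rw [ha]; simp [h]
  · intro i
    apply mul_left_cancel₀ hg1
    calc ((g:ℤ)-1) * ((g:ℤ) * (T (i+1) / ((g:ℤ)-1)))
        = (g:ℤ) * (((g:ℤ)-1) * (T (i+1)/((g:ℤ)-1))) := by ring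
      _ = (g:ℤ) * T (i+1) := by rw [hx]
      _ = T i + ((g:ℤ)^p - 1) * a i := hshift i
      _ = ((g:ℤ)-1) * (T i / ((g:ℤ)-1)) + (((g:ℤ)-1)*(m:ℤ)) * a i := by rw [hx, hgm]
      _ = ((g:ℤ)-1) * (T i / ((g:ℤ)-1) + (m:ℤ) * a i) := by ring
  · refine ⟨0, ?_⟩
    show (m:ℤ) * a 0 ≠ 0
    have ha0 : a 0 = 1 := by rw [ha]; simp [ZMod.val_zero]; omega
    have hm0 : 0 < m := by
      rw [hm]
      exact Finset.sum_pos (fun i _ => Nat.pow_pos (by omega)) ⟨0, mem_range.mpr hp0⟩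
    rw [ha0, mul_one]
    exact_mod_cast hm0.ne'

/-- Any incomplete number is at least 2. -/
lemma two_le_of_incomplete (g m : ℕ) (hg : 4 ≤ g) (h : Incomplete g m) : 2 ≤ m := by
  obtain ⟨r, x, l, ⟨⟨hr, hdig, hrel⟩, i₀, hi₀⟩⟩ := h
  haveI : NeZero r := ⟨hr.ne'⟩
  have hunfold : ∀ k : ℕ, (g:ℤ)^k * x (k : ZMod r)
      = x 0 + ∑ j ∈ range k, (g:ℤ)^j * l (j : ZMod r) := by
    intro k; induction k with
    | zero => simp
    | succ k ih =>
      have hcast : ((k+1 : ℕ) : ZMod r) = (k : ZMod r) + 1 := by push_cast; ring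
      rw [hcast, pow_succ, sum_range_succ]
      linear_combination ih + (g:ℤ)^k * (hrel (k : ZMod r))
  have hmain := hunfold r
  rw [ZMod.natCast_self] at hmain
  set N := ∑ j ∈ range r, (g:ℤ)^j * l (j : ZMod r) with hN
  have hNx : ((g:ℤ)^r - 1) * x 0 = N := by linarith
  by_contra hlt
  push_neg at hlt
  interval_cases m
  · rcases hdig i₀ with h0 | h0 <;> simp_all
  · have hnonneg : ∀ j ∈ range r, 0 ≤ (g:ℤ)^j * l (j : ZMod r) := by
      intro j _
      rcases hdig (j : ZMod r) with h0 | h0 <;> rw [h0] <;> positivity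
    have hterm : (g:ℤ)^(i₀.val) * l i₀ ≥ 1 := by
      rcases hdig i₀ with h0 | h0
      · exact absurd h0 hi₀
      · rw [h0]; push_cast
        nlinarith [one_le_pow₀ (by exact_mod_cast (by omega : (1:ℕ) ≤ g) : (1:ℤ) ≤ (g:ℤ))
          (n := i₀.val)]
    have hmem : i₀.val ∈ range r := mem_range.mpr (ZMod.val_lt i₀)
    have hNpos : 1 ≤ N := by
      have := Finset.single_le_sum hnonneg hmem
      rw [ZMod.natCast_rightInverse i₀] at this
      linarith
    have hle : N ≤ ∑ j ∈ range r, (g:ℤ)^j := by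
      apply Finset.sum_le_sum
      intro j _
      have hp : (0:ℤ) ≤ (g:ℤ)^j := by positivity
      rcases hdig (j : ZMod r) with h0 | h0 <;> rw [h0] <;> push_cast <;> linarith
    have hgeom : (∑ j ∈ range r, (g:ℤ)^j) * ((g:ℤ) - 1) = (g:ℤ)^r - 1 := geom_sum_mul _ _
    have hgeompos : 1 ≤ ∑ j ∈ range r, (g:ℤ)^j := by
      have h1 : (0:ℕ) ∈ range r := mem_range.mpr hr
      have := Finset.single_le_sum (f := fun j => (g:ℤ)^j)
        (fun j _ => by positivity) h1
      simpa using this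
    have hg4 : (4:ℤ) ≤ (g:ℤ) := by exact_mod_cast hg
    have hNlt : N < (g:ℤ)^r - 1 := by nlinarith
    rcases le_or_gt (x 0) 0 with hx0 | hx0
    · nlinarith
    · have : 1 ≤ x 0 := hx0
      nlinarith

/-- Every incomplete number has a primitive divisor. -/
lemma exists_primitive_dvd (g : ℕ) (hg : 4 ≤ g) :
    ∀ m, Incomplete g m → ∃ d, d ∣ m ∧ Primitive g d := by
  intro m
  induction m using Nat.strong_induction_on with
  | _ m ih =>
    intro hm
    by_cases hall : ∀ d, d ∣ m → d ≠ m → Complete g d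
    · exact ⟨m, dvd_refl m, hm, hall⟩
    · push_neg at hall
      obtain ⟨d, hd, hdm, hdi⟩ := hall
      have hdinc : Incomplete g d := not_not.mp hdi
      have hm2 : 2 ≤ m := two_le_of_incomplete g m hg hm
      have hlt : d < m := lt_of_le_of_ne (Nat.le_of_dvd (by omega) hd) hdm
      obtain ⟨e, he, hep⟩ := ih d hlt hdinc
      exact ⟨e, he.trans hd, hep⟩

/-- Repunits with distinct prime lengths are coprime. -/
lemma coprime_geom (g p q : ℕ) (hp : p.Prime) (hq : q.Prime) (hne : p ≠ q) :
    Nat.Coprime (∑ i ∈ range p, g ^ i) (∑ i ∈ range q, g ^ i) := by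
  set mp := ∑ i ∈ range p, g ^ i with hmp
  set mq := ∑ i ∈ range q, g ^ i with hmq
  set d := Nat.gcd mp mq with hd
  have hdvd_pow : ∀ (s ms : ℕ), ms = ∑ i ∈ range s, g ^ i → (d:ℤ) ∣ (ms:ℤ) →
      ((g:ℕ) : ZMod d)^s = 1 := by
    intro s ms hms hdvd
    have hcast : ((ms:ℕ):ℤ) = ∑ i ∈ range s, (g:ℤ)^i := by rw [hms]; push_cast; rfl
    have h1 : (d:ℤ) ∣ (g:ℤ)^s - 1 := by
      have hgs := geom_sum_mul (g:ℤ) s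
      rw [← hgs, ← hcast]
      exact hdvd.mul_right _
    have h2 := (ZMod.intCast_zmod_eq_zero_iff_dvd _ d).mpr h1
    push_cast at h2
    linear_combination h2
  have hgp := hdvd_pow p mp hmp (Int.natCast_dvd_natCast.mpr (Nat.gcd_dvd_left _ _))
  have hgq := hdvd_pow q mq hmq (Int.natCast_dvd_natCast.mpr (Nat.gcd_dvd_right _ _))
  have hord : orderOf ((g:ℕ) : ZMod d) ∣ Nat.gcd p q :=
    Nat.dvd_gcd (orderOf_dvd_of_pow_eq_one hgp) (orderOf_dvd_of_pow_eq_one hgq)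
  rw [(Nat.coprime_primes hp hq).mpr hne] at hord
  have hg1 : ((g:ℕ) : ZMod d) = 1 := orderOf_eq_one_iff.mp (Nat.dvd_one.mp hord)
  have hdg1 : (d:ℤ) ∣ (g:ℤ) - 1 := by
    apply (ZMod.intCast_zmod_eq_zero_iff_dvd _ d).mp
    push_cast
    rw [hg1]; ring
  have hdvd_p : ∀ (s ms : ℕ), ms = ∑ i ∈ range s, g ^ i → (d:ℤ) ∣ (ms:ℤ) → d ∣ s := by
    intro s ms hms hdvd
    have hcast : ((ms:ℕ):ℤ) - (s:ℤ) = ∑ i ∈ range s, ((g:ℤ)^i - 1) := by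
      rw [hms, Finset.sum_sub_distrib]
      push_cast; simp
    have h3 : (d:ℤ) ∣ (ms:ℤ) - (s:ℤ) := by
      rw [hcast]
      exact Finset.dvd_sum fun i _ =>
        hdg1.trans (by simpa using sub_dvd_pow_sub_pow (g:ℤ) 1 i)
    have h4 : (d:ℤ) ∣ (s:ℤ) := by
      have := dvd_sub hdvd h3
      simpa using this
    exact Int.natCast_dvd_natCast.mp h4
  have hp' : d ∣ p := hdvd_p p mp hmp (Int.natCast_dvd_natCast.mpr (Nat.gcd_dvd_left _ _))
  have hq' : d ∣ q := hdvd_p q mq hmq (Int.natCast_dvd_natCast.mpr (Nat.gcd_dvd_right _ _))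
  have : d ∣ Nat.gcd p q := Nat.dvd_gcd hp' hq'
  rw [(Nat.coprime_primes hp hq).mpr hne] at this
  exact Nat.dvd_one.mp this

end Aux

theorem stmt14 (g : ℕ) (hg4 : 4 ≤ g) (hge : Even g) :
    {m : ℕ | Primitive g m}.Infinite := by
  classical
  have key : ∀ p : ℕ, ∃ d : ℕ, (p.Prime ∧ g ≤ p) →
      (d ∣ (∑ i ∈ range p, g ^ i) ∧ Primitive g d) := by
    intro p
    by_cases h : p.Prime ∧ g ≤ p
    · obtain ⟨d, hd, hdp⟩ := exists_primitive_dvd g hg4 _ (incomplete_geom g p hg4 h.2)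
      exact ⟨d, fun _ => ⟨hd, hdp⟩⟩
    · exact ⟨0, fun hc => absurd hc h⟩
  choose f hf using key
  have hPinf : {p : ℕ | p.Prime ∧ g ≤ p}.Infinite := by
    have h2 : ({p : ℕ | p.Prime} \ {p | p < g}).Infinite :=
      Nat.infinite_setOf_prime.diff (Set.finite_Iio g)
    exact h2.mono (fun x hx => ⟨hx.1, not_lt.mp hx.2⟩)
  apply Set.infinite_of_injOn_mapsTo (f := f) ?_ ?_ hPinf
  · intro p hp q hq hfq
    by_contra hne
    obtain ⟨hdp, hprim⟩ := hf p hp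
    obtain ⟨hdq, hprimq⟩ := hf q hq
    have hco := coprime_geom g p q hp.1 hq.1 hne
    have hdvd1 : f p ∣ 1 := by
      rw [← hco]
      exact Nat.dvd_gcd hdp (hfq ▸ hdq)
    have h2 : 2 ≤ f p := two_le_of_incomplete g _ hg4 hprim.1
    have := Nat.dvd_one.mp hdvd1
    omega
  · intro p hp
    exact (hf p hp).2
end

section
/- Let m be a non-trivial primitive number with ord_g(m) = n and an extreme cycle point with digits m·k_0, ..., m·k_{n-1} where k_i ∈ {0,1}. Let d = gcd(k_0 + g·k_1 + ... + g^{n-1}·k_{n-1}, g^n - 1). Then m = (g^n - 1)/d. Conversely, for any digits k_0,...,k_{n-1} ∈ {0,1} not all zero, setting d = gcd(k_0 + g·k_1 + ... + g^{n-1}·k_{n-1}, g^n - 1), the number m = (g^n - 1)/d is incomplete with an extreme cycle having digits m·k_0, ..., m·k_{n-1}. -/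
lemma aux_zmod_all {n : ℕ} (hn : 0 < n) {P : ZMod n → Prop}
    (h : ∀ j : ℕ, P (j : ZMod n)) : ∀ i, P i := by
  haveI : NeZero n := ⟨hn.ne'⟩
  intro i
  have := h i.val
  rwa [ZMod.natCast_rightInverse i] at this

lemma aux_mne (g m : ℕ) (h : Incomplete g m) : m ≠ 0 := by
  obtain ⟨r, x, l, ⟨_, hl, _⟩, i, hi⟩ := h
  rintro rfl
  rcases hl i with h | h <;> simp [h] at hi

lemma aux_divide (g m r p : ℕ) (hp : p.Prime) (hpm : p ∣ m)
    (x l : ZMod r → ℤ) (hc : IsNontrivialCycle g m r x l)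
    (hx : ∀ i, (p : ℤ) ∣ x i) : Incomplete g (m / p) := by
  obtain ⟨⟨hr, hl, hrec⟩, i0, hi0⟩ := hc
  have hm0 : m ≠ 0 := by
    rintro rfl; rcases hl i0 with h | h <;> simp [h] at hi0
  have hp0 : (p : ℤ) ≠ 0 := by exact_mod_cast hp.pos.ne'
  have hld : ∀ i, (p : ℤ) ∣ l i := by
    intro i
    rcases hl i with h | h
    · simp [h]
    · rw [h]; exact_mod_cast Int.natCast_dvd_natCast.mpr hpm
  refine ⟨r, fun i => x i / p, fun i => l i / p, ⟨hr, ?_, ?_⟩, i0, ?_⟩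
  · intro i
    rcases hl i with h | h
    · left; simp [h]
    · right
      show l i / (p : ℤ) = ((m / p : ℕ) : ℤ)
      rw [h]
      obtain ⟨m', rfl⟩ := hpm
      rw [Nat.mul_div_cancel_left _ hp.pos]
      push_cast
      rw [Int.mul_ediv_cancel_left _ hp0]
  · intro i
    apply mul_left_cancel₀ hp0
    rw [mul_add, Int.mul_ediv_cancel' (hx i), Int.mul_ediv_cancel' (hld i),
      mul_left_comm, Int.mul_ediv_cancel' (hx (i + 1)), hrec]
  · have h : l i0 = (m : ℤ) := (hl i0).resolve_left hi0
    show l i0 / (p : ℤ) ≠ 0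
    rw [h]
    obtain ⟨m', rfl⟩ := hpm
    have hm'0 : m' ≠ 0 := by rintro rfl; simp at hm0
    push_cast
    rw [Int.mul_ediv_cancel_left _ hp0]
    exact_mod_cast hm'0

lemma aux_coprime (g m : ℕ) (hprim : Primitive g m) : Nat.Coprime g m := by
  have hm0 : m ≠ 0 := aux_mne g m hprim.1
  by_contra hc
  obtain ⟨p, hp, hpd⟩ := Nat.exists_prime_and_dvd hc
  have hpg : p ∣ g := hpd.trans (Nat.gcd_dvd_left _ _)
  have hpm : p ∣ m := hpd.trans (Nat.gcd_dvd_right _ _)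
  obtain ⟨r, x, l, hc'⟩ := hprim.1
  have hld : ∀ i, (p : ℤ) ∣ l i := by
    intro i
    rcases hc'.1.2.1 i with h | h
    · simp [h]
    · rw [h]; exact_mod_cast Int.natCast_dvd_natCast.mpr hpm
  have hx : ∀ i, (p : ℤ) ∣ x i := by
    intro i
    have hrec := hc'.1.2.2 i
    have h1 : (p : ℤ) ∣ (g : ℤ) * x (i + 1) :=
      Dvd.dvd.mul_right (Int.natCast_dvd_natCast.mpr hpg) _
    have h2 : x i = (g : ℤ) * x (i + 1) - l i := by linarith
    rw [h2]
    exact dvd_sub h1 (hld i)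
  have hinc := aux_divide g m r p hp hpm x l hc' hx
  refine hprim.2 (m / p) ⟨p, (Nat.div_mul_cancel hpm).symm⟩ ?_ hinc
  have := Nat.div_lt_self (Nat.pos_of_ne_zero hm0) hp.one_lt
  omega

lemma aux_telescope (g m n : ℕ) (k : ZMod n → ℕ) (x : ZMod n → ℤ)
    (hx : ∀ i, (g : ℤ) * x (i + 1) = x i + (m : ℤ) * (k i : ℤ)) (j : ℕ) :
    (g : ℤ) ^ j * x ((j : ℕ) : ZMod n) =
      x 0 + (m : ℤ) * ∑ i ∈ Finset.range j, (g : ℤ) ^ i * (k ((i : ℕ) : ZMod n) : ℤ) := by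
  induction j with
  | zero => simp
  | succ j ih =>
    have hcast : ((j + 1 : ℕ) : ZMod n) = ((j : ℕ) : ZMod n) + 1 := by push_cast; ring
    have hrec := hx ((j : ℕ) : ZMod n)
    rw [hcast, pow_succ, mul_assoc, hrec, mul_add, ih, Finset.sum_range_succ]
    ring

theorem stmt17 (g : ℕ) (hg4 : 4 ≤ g) (hge : Even g) :
    (∀ (m : ℕ), Odd m → Primitive g m → m ≠ g - 1 →
      ∀ (n : ℕ), n = orderOf ((g : ZMod m)) →
      ∀ (k : ZMod n → ℕ), (∀ i, k i = 0 ∨ k i = 1) → (∃ i, k i ≠ 0) →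
      ∀ (x : ZMod n → ℤ), (∀ i, (g : ℤ) * x (i + 1) = x i + (m : ℤ) * (k i : ℤ)) →
      ∀ (d : ℕ), d = Nat.gcd (∑ i ∈ Finset.range n, g ^ i * k (i : ZMod n)) (g ^ n - 1) →
      m = (g ^ n - 1) / d) ∧
    (∀ (n : ℕ), 0 < n →
      ∀ (k : ZMod n → ℕ), (∀ i, k i = 0 ∨ k i = 1) → (∃ i, k i ≠ 0) →
      ∀ (d m : ℕ), d = Nat.gcd (∑ i ∈ Finset.range n, g ^ i * k (i : ZMod n)) (g ^ n - 1) →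
      m = (g ^ n - 1) / d →
      Incomplete g m ∧
        ∃ x : ZMod n → ℤ, ∀ i, (g : ℤ) * x (i + 1) = x i + (m : ℤ) * (k i : ℤ)) := by
  constructor
  · -- Part 1
    intro m _hodd hprim _hne n hn k hk01 hkex x hx d hd
    have hm0 : m ≠ 0 := aux_mne g m hprim.1
    have hcop : Nat.Coprime g m := aux_coprime g m hprim
    haveI : NeZero m := ⟨hm0⟩
    have hn0 : 0 < n := by
      rw [hn]
      have hu : ((ZMod.unitOfCoprime g hcop : (ZMod m)ˣ) : ZMod m) = (g : ZMod m) :=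
        ZMod.coe_unitOfCoprime _ _
      rw [← hu, orderOf_units]
      exact orderOf_pos _
    haveI : NeZero n := ⟨hn0.ne'⟩
    have hgn1 : 1 ≤ g ^ n := Nat.one_le_pow _ _ (by omega)
    have hgn4 : 4 ≤ g ^ n := le_trans hg4 (Nat.le_self_pow hn0.ne' g)
    have hpow : (g : ZMod m) ^ n = 1 := by rw [hn]; exact pow_orderOf_eq_one _
    have hdvd : m ∣ g ^ n - 1 := by
      have h1 : ((g ^ n - 1 : ℕ) : ZMod m) = 0 := by
        rw [Nat.cast_sub hgn1, Nat.cast_pow, Nat.cast_one, hpow, sub_self]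
      exact (ZMod.natCast_eq_zero_iff _ _).mp h1
    set S : ℕ := ∑ i ∈ Finset.range n, g ^ i * k (i : ZMod n) with hS
    have hScast : ((S : ℕ) : ℤ) = ∑ i ∈ Finset.range n, (g : ℤ) ^ i * (k ((i : ℕ) : ZMod n) : ℤ) := by
      rw [hS]; push_cast; rfl
    have hkey : ((g : ℤ) ^ n - 1) * x 0 = (m : ℤ) * (S : ℤ) := by
      have := aux_telescope g m n k x hx n
      rw [ZMod.natCast_self] at this
      rw [hScast]
      linarith
    have hS0 : S ≠ 0 := by
      intro h
      obtain ⟨i, hi⟩ := hkex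
      have hall := Finset.sum_eq_zero_iff.mp h
      have hv := hall i.val (Finset.mem_range.mpr (ZMod.val_lt i))
      rw [ZMod.natCast_rightInverse i] at hv
      have hg0 : g ^ i.val ≠ 0 := pow_ne_zero _ (by omega)
      exact hi ((Nat.mul_eq_zero.mp hv).resolve_left hg0)
    set t := (g ^ n - 1) / m with ht
    have hmt : m * t = g ^ n - 1 := Nat.mul_div_cancel' hdvd
    have ht0 : t ≠ 0 := by rintro h; rw [h, Nat.mul_zero] at hmt; omega
    have hcastgn : ((g ^ n - 1 : ℕ) : ℤ) = (g : ℤ) ^ n - 1 := by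
      rw [Nat.cast_sub hgn1, Nat.cast_pow, Nat.cast_one]
    have hcastmt : ((m : ℤ)) * (t : ℤ) = (g : ℤ) ^ n - 1 := by
      rw [← hcastgn, ← hmt]; push_cast; ring
    have htx : (t : ℤ) * x 0 = (S : ℤ) := by
      have hmz : (m : ℤ) ≠ 0 := by exact_mod_cast hm0
      apply mul_left_cancel₀ hmz
      rw [← mul_assoc, hcastmt, hkey]
    have htpos : (0 : ℤ) < (t : ℤ) := by exact_mod_cast Nat.pos_of_ne_zero ht0
    have hx0 : 0 ≤ x 0 := by
      by_contra hneg
      push_neg at hneg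
      have hSnn : (0 : ℤ) ≤ (S : ℤ) := Int.natCast_nonneg _
      nlinarith
    have hxa : (((x 0).toNat : ℕ) : ℤ) = x 0 := Int.toNat_of_nonneg hx0
    have hta : t * (x 0).toNat = S := by
      have : ((t * (x 0).toNat : ℕ) : ℤ) = ((S : ℕ) : ℤ) := by push_cast [hxa]; exact htx
      exact_mod_cast this
    have hgam : Nat.gcd (x 0).toNat m = 1 := by
      by_contra hne
      obtain ⟨p, hp, hpd⟩ := Nat.exists_prime_and_dvd hne
      have hpa : p ∣ (x 0).toNat := hpd.trans (Nat.gcd_dvd_left _ _)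
      have hpm : p ∣ m := hpd.trans (Nat.gcd_dvd_right _ _)
      have hpg : ¬ p ∣ g := by
        intro hpg
        have hd1 : p ∣ Nat.gcd g m := Nat.dvd_gcd hpg hpm
        rw [hcop] at hd1
        exact hp.one_lt.ne' (Nat.dvd_one.mp hd1)
      have hpx : ∀ j : ℕ, (p : ℤ) ∣ x ((j : ℕ) : ZMod n) := by
        intro j
        induction j with
        | zero =>
          have : (p : ℤ) ∣ ((x 0).toNat : ℤ) := Int.natCast_dvd_natCast.mpr hpa
          rw [hxa] at this
          simpa using this
        | succ j ih =>
          have hrec := hx ((j : ℕ) : ZMod n)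
          have hcast : ((j + 1 : ℕ) : ZMod n) = ((j : ℕ) : ZMod n) + 1 := by push_cast; ring
          rw [hcast]
          have hdr : (p : ℤ) ∣ (g : ℤ) * x (((j : ℕ) : ZMod n) + 1) := by
            rw [hrec]
            exact dvd_add ih (Dvd.dvd.mul_right (Int.natCast_dvd_natCast.mpr hpm) _)
          rcases (Nat.prime_iff_prime_int.mp hp).dvd_mul.mp hdr with h | h
          · exact absurd (Int.natCast_dvd_natCast.mp h) hpg
          · exact h
      have hxall : ∀ i, (p : ℤ) ∣ x i := aux_zmod_all hn0 hpx
      have hcyc : IsNontrivialCycle g m n x (fun i => (m : ℤ) * (k i : ℤ)) := by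
        refine ⟨⟨hn0, ?_, hx⟩, ?_⟩
        · intro i
          rcases hk01 i with h | h
          · left; simp [h]
          · right; simp [h]
        · obtain ⟨i, hi⟩ := hkex
          refine ⟨i, ?_⟩
          have hki : k i = 1 := (hk01 i).resolve_left hi
          simp only [hki]
          simp [hm0]
      have hinc := aux_divide g m n p hp hpm x _ hcyc hxall
      refine hprim.2 (m / p) ⟨p, (Nat.div_mul_cancel hpm).symm⟩ ?_ hinc
      have := Nat.div_lt_self (Nat.pos_of_ne_zero hm0) hp.one_lt
      omega
    have hdt : d = t := by
      rw [hd, ← hta, ← hmt, Nat.mul_comm m t, Nat.gcd_mul_left, hgam, Nat.mul_one]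
    rw [hdt, ← hmt, Nat.mul_div_cancel _ (Nat.pos_of_ne_zero ht0)]
  · -- Part 2
    intro n hn0 k hk01 hkex d m hd hm
    haveI : NeZero n := ⟨hn0.ne'⟩
    have hgn1 : 1 ≤ g ^ n := Nat.one_le_pow _ _ (by omega)
    have hgn4 : 4 ≤ g ^ n := le_trans hg4 (Nat.le_self_pow hn0.ne' g)
    set T : ZMod n → ℕ := fun i => ∑ j ∈ Finset.range n, g ^ j * k (i + ((j : ℕ) : ZMod n))
      with hT
    have hrecT : ∀ i : ZMod n, g * T (i + 1) + k i = T i + g ^ n * k i := by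
      intro i
      obtain ⟨s, rfl⟩ : ∃ s, n = s + 1 := ⟨n - 1, by omega⟩
      have harg : ∀ j : ℕ, i + ((j + 1 : ℕ) : ZMod (s + 1)) = i + 1 + ((j : ℕ) : ZMod (s + 1)) := by
        intro j; push_cast; ring
      have hend : i + 1 + ((s : ℕ) : ZMod (s + 1)) = i := by
        have hz : ((s + 1 : ℕ) : ZMod (s + 1)) = 0 := ZMod.natCast_self _
        push_cast at hz ⊢
        rw [add_assoc, add_comm (1 : ZMod (s+1)) _, hz, add_zero]
      have h1 : T i = (∑ j ∈ Finset.range s, g ^ (j + 1) * k (i + 1 + ((j : ℕ) : ZMod (s + 1))))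
          + k i := by
        show (∑ j ∈ Finset.range (s + 1), g ^ j * k (i + ((j : ℕ) : ZMod (s + 1)))) = _
        rw [Finset.sum_range_succ' (fun j => g ^ j * k (i + ((j : ℕ) : ZMod (s + 1)))) s]
        simp only [pow_zero, one_mul, Nat.cast_zero, add_zero]
        congr 1
        refine Finset.sum_congr rfl fun j _ => ?_
        rw [harg j]
      have h2 : g * T (i + 1) =
          (∑ j ∈ Finset.range s, g ^ (j + 1) * k (i + 1 + ((j : ℕ) : ZMod (s + 1))))
            + g ^ (s + 1) * k i := by
        show g * (∑ j ∈ Finset.range (s + 1), g ^ j * k (i + 1 + ((j : ℕ) : ZMod (s + 1)))) = _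
        rw [Finset.mul_sum]
        have : ∀ j ∈ Finset.range (s + 1),
            g * (g ^ j * k (i + 1 + ((j : ℕ) : ZMod (s + 1))))
              = g ^ (j + 1) * k (i + 1 + ((j : ℕ) : ZMod (s + 1))) := by
          intro j _; ring
        rw [Finset.sum_congr rfl this, Finset.sum_range_succ, hend]
      rw [h1, h2]
      ring
    have hT0 : T 0 = ∑ i ∈ Finset.range n, g ^ i * k (i : ZMod n) := by
      rw [hT]
      refine Finset.sum_congr rfl fun j _ => by rw [zero_add]
    have hdT0 : d ∣ T 0 := by rw [hd, hT0] at *; exact Nat.gcd_dvd_left _ _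
    have hdgn : d ∣ g ^ n - 1 := by rw [hd]; exact Nat.gcd_dvd_right _ _
    have hd0 : 0 < d := by
      rw [hd]
      exact Nat.gcd_pos_of_pos_right _ (by omega)
    have hcopgd : Nat.Coprime g d := by
      have h1 : Nat.gcd g (g ^ n - 1) ∣ g ^ n :=
        (Nat.gcd_dvd_left _ _).trans (dvd_pow_self g hn0.ne')
      have h2 : Nat.gcd g (g ^ n - 1) ∣ g ^ n - 1 := Nat.gcd_dvd_right _ _
      have h3 : Nat.gcd g (g ^ n - 1) ∣ 1 := by
        have h4 := Nat.dvd_sub h1 h2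
        rwa [Nat.sub_sub_self hgn1] at h4
      exact Nat.Coprime.coprime_dvd_right hdgn (Nat.dvd_one.mp h3)
    have hdTall : ∀ i, d ∣ T i := by
      refine aux_zmod_all hn0 ?_
      intro j
      induction j with
      | zero => simpa using hdT0
      | succ j ih =>
        have hcast : ((j + 1 : ℕ) : ZMod n) = ((j : ℕ) : ZMod n) + 1 := by push_cast; ring
        rw [hcast]
        have hr := hrecT ((j : ℕ) : ZMod n)
        have e : (g ^ n - 1) * k ((j : ℕ) : ZMod n) + k ((j : ℕ) : ZMod n)
            = g ^ n * k ((j : ℕ) : ZMod n) := by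
          rcases hk01 ((j : ℕ) : ZMod n) with h | h <;> rw [h] <;> omega
        have hmain : g * T (((j : ℕ) : ZMod n) + 1)
            = T ((j : ℕ) : ZMod n) + (g ^ n - 1) * k ((j : ℕ) : ZMod n) := by omega
        have hdvd2 : d ∣ g * T (((j : ℕ) : ZMod n) + 1) := by
          rw [hmain]
          exact dvd_add ih (Dvd.dvd.mul_right hdgn _)
        exact (Nat.Coprime.coprime_dvd_right dvd_rfl hcopgd.symm).dvd_of_dvd_mul_left hdvd2
    have hdm : d * m = g ^ n - 1 := by rw [hm]; exact Nat.mul_div_cancel' hdgn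
    have hm0 : m ≠ 0 := by
      rintro rfl
      rw [Nat.mul_zero] at hdm
      omega
    have hcastgn : ((g ^ n - 1 : ℕ) : ℤ) = (g : ℤ) ^ n - 1 := by
      rw [Nat.cast_sub hgn1, Nat.cast_pow, Nat.cast_one]
    have hdmz : ((d : ℕ) : ℤ) * (m : ℤ) = (g : ℤ) ^ n - 1 := by
      rw [← hcastgn, ← hdm]; push_cast; ring
    set u : ZMod n → ℕ := fun i => T i / d with hu
    have hdu : ∀ i, d * u i = T i := fun i => Nat.mul_div_cancel' (hdTall i)
    set x : ZMod n → ℤ := fun i => ((u i : ℕ) : ℤ) with hxdef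
    have hrecTZ : ∀ i, (g : ℤ) * (T (i + 1) : ℤ) = (T i : ℤ) + ((g : ℤ) ^ n - 1) * (k i : ℤ) := by
      intro i
      have h1 := hrecT i
      have h2 := congrArg (Nat.cast : ℕ → ℤ) h1
      push_cast at h2
      linarith
    have hxrec : ∀ i, (g : ℤ) * x (i + 1) = x i + (m : ℤ) * (k i : ℤ) := by
      intro i
      have hdz : ((d : ℕ) : ℤ) ≠ 0 := by exact_mod_cast hd0.ne'
      apply mul_left_cancel₀ hdz
      have e1 : ((d : ℕ) : ℤ) * (u (i + 1) : ℤ) = (T (i + 1) : ℤ) := by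
        exact_mod_cast congrArg (Nat.cast : ℕ → ℤ) (hdu (i + 1))
      have e0 : ((d : ℕ) : ℤ) * (u i : ℤ) = (T i : ℤ) := by
        exact_mod_cast congrArg (Nat.cast : ℕ → ℤ) (hdu i)
      have hz := hrecTZ i
      show (d : ℤ) * ((g : ℤ) * (u (i + 1) : ℤ)) = (d : ℤ) * ((u i : ℤ) + (m : ℤ) * (k i : ℤ))
      linear_combination (g : ℤ) * e1 - e0 + hz - (k i : ℤ) * hdmz
    have hinc : Incomplete g m := by
      refine ⟨n, x, fun i => (m : ℤ) * (k i : ℤ), ⟨hn0, ?_, hxrec⟩, ?_⟩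
      · intro i
        rcases hk01 i with h | h
        · left; simp [h]
        · right; simp [h]
      · obtain ⟨i, hi⟩ := hkex
        refine ⟨i, ?_⟩
        have hki : k i = 1 := (hk01 i).resolve_left hi
        simp only [hki]
        simp [hm0]
    exact ⟨hinc, x, hxrec⟩
end

section
/- Let q > g-1 be coprime to g-1 and let m = (g^q - 1)/(g - 1). Then: gcd(g-1, m) = 1; ord_g(m) = q; every divisor e > 1 of m satisfies ord_g(e) ≠ 1 and ord_g(e) divides q; and m is incomplete, having the extreme cycle point x_0 = (1 + g + ... + g^{g-2})/(g-1) with digits m repeated g-1 times followed by q-g+1 zeros. -/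
/-- Auxiliary: the numerator of the cycle point `x j`, scaled by `(g-1)^2`. -/
def auxP (g q j : ℕ) : ℤ :=
  (g : ℤ) ^ (q - j) * ((g : ℤ) ^ (min j (g - 1)) - 1) + ((g : ℤ) ^ (g - 1 - j) - 1)

lemma aux_g_cast (g : ℕ) (hg : 2 ≤ g) : ((g : ℕ) : ZMod (g - 1)) = 1 := by
  have h : ((g : ℕ) : ZMod (g - 1)) = ((g - 1 : ℕ) : ZMod (g - 1)) + ((1 : ℕ) : ZMod (g - 1)) := by
    rw [← Nat.cast_add]; congr 1; omega
  simp [h, ZMod.natCast_self]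

lemma aux_dvd (g : ℕ) (hg : 2 ≤ g) (a b c : ℕ) (h : (g - 1) ∣ (b + c)) :
    ((g : ℤ) - 1) ∣ ((g : ℤ) ^ a * (∑ i ∈ Finset.range b, (g : ℤ) ^ i)
      + ∑ i ∈ Finset.range c, (g : ℤ) ^ i) := by
  haveI : NeZero (g - 1) := ⟨by omega⟩
  have hcast : ((g : ℤ) - 1) = ((g - 1 : ℕ) : ℤ) := by push_cast [Nat.cast_sub (by omega : 1 ≤ g)]; ring
  rw [hcast, ← ZMod.intCast_zmod_eq_zero_iff_dvd]
  push_cast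
  rw [aux_g_cast g hg]
  simp only [one_pow, Finset.sum_const, Finset.card_range, nsmul_eq_mul, mul_one, one_mul]
  rw [← Nat.cast_add, ZMod.natCast_eq_zero_iff]
  exact h

lemma aux_P_eq (g q j : ℕ) (hg : 2 ≤ g) :
    auxP g q j = ((g : ℤ) - 1) * ((g : ℤ) ^ (q - j) * (∑ i ∈ Finset.range (min j (g - 1)), (g : ℤ) ^ i)
      + ∑ i ∈ Finset.range (g - 1 - j), (g : ℤ) ^ i) := by
  unfold auxP
  rw [show ((g:ℤ) ^ (min j (g-1)) - 1) = (∑ i ∈ Finset.range (min j (g-1)), (g : ℤ) ^ i) * ((g:ℤ) - 1) from (geom_sum_mul _ _).symm,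
     show ((g:ℤ) ^ (g - 1 - j) - 1) = (∑ i ∈ Finset.range (g - 1 - j), (g : ℤ) ^ i) * ((g:ℤ) - 1) from (geom_sum_mul _ _).symm]
  ring

lemma aux_P_dvd (g q j : ℕ) (hg : 2 ≤ g) : ((g : ℤ) - 1) ^ 2 ∣ auxP g q j := by
  rw [aux_P_eq g q j hg, sq]
  exact mul_dvd_mul_left _ (aux_dvd g hg _ _ _ ⟨1, by omega⟩)

lemma cycle_aux (g q : ℕ) (hg4 : 4 ≤ g) (hq : g - 1 < q) (m : ℕ)
    (hm2 : 2 ≤ m) (hmZ : ((g : ℤ) - 1) * m = (g : ℤ) ^ q - 1) :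
    ∃ x : ZMod q → ℤ,
      IsNontrivialCycle g m q x (fun i => if i.val < g - 1 then (m : ℤ) else 0) ∧
      x 0 = ((∑ i ∈ Finset.range (g - 1), g ^ i) / (g - 1) : ℕ) := by
  have hq0 : 0 < q := by omega
  haveI : NeZero q := ⟨by omega⟩
  haveI : Fact (1 < q) := ⟨by omega⟩
  have hGne : ((g : ℤ) - 1) ≠ 0 := by
    have : (4 : ℤ) ≤ (g : ℤ) := by exact_mod_cast hg4
    omega
  have hG2ne : ((g : ℤ) - 1) ^ 2 ≠ 0 := pow_ne_zero _ hGne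
  have hF : ∀ j, ((g : ℤ) - 1) ^ 2 * (auxP g q j / ((g : ℤ) - 1) ^ 2) = auxP g q j :=
    fun j => Int.mul_ediv_cancel' (aux_P_dvd g q j (by omega))
  refine ⟨fun i => auxP g q i.val / ((g : ℤ) - 1) ^ 2, ⟨⟨hq0, ?_, ?_⟩, ?_⟩, ?_⟩
  · intro i
    by_cases h : i.val < g - 1 <;> simp [h]
  · intro i
    have hj : i.val < q := ZMod.val_lt i
    have hval : (i + 1).val = (i.val + 1) % q := by
      rw [ZMod.val_add, ZMod.val_one]
    apply mul_left_cancel₀ hG2ne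
    simp only
    rw [mul_add, show ((g:ℤ)-1)^2 * ((g:ℤ) * (auxP g q (i+1).val / ((g : ℤ) - 1) ^ 2))
        = (g:ℤ) * (((g:ℤ)-1)^2 * (auxP g q (i+1).val / ((g : ℤ) - 1) ^ 2)) from by ring,
      hF, hF, hval]
    rcases lt_or_ge i.val (g - 1) with hcase | hcase
    · -- digit m
      rw [if_pos hcase]
      have hj1 : (i.val + 1) % q = i.val + 1 := Nat.mod_eq_of_lt (by omega)
      rw [hj1]
      set j := i.val with hjdef
      set a := q - j - 1 with hadef
      set d := g - 1 - j - 1 with hddef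
      have e1 : q - (j + 1) = a := by omega
      have e2 : q - j = a + 1 := by omega
      have e3 : g - 1 - (j + 1) = d := by omega
      have e4 : g - 1 - j = d + 1 := by omega
      have e5 : min (j + 1) (g - 1) = j + 1 := by omega
      have e6 : min j (g - 1) = j := by omega
      have e7 : q = a + j + 1 := by omega
      unfold auxP
      rw [e1, e2, e3, e4, e5, e6]
      rw [e7] at hmZ
      linear_combination (1 - (g : ℤ)) * hmZ
    · -- digit 0
      rw [if_neg (by omega)]
      rcases lt_or_ge (i.val + 1) q with hlt | hge
      · have hj1 : (i.val + 1) % q = i.val + 1 := Nat.mod_eq_of_lt hlt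
        rw [hj1]
        set j := i.val with hjdef
        set a := q - j - 1 with hadef
        have e1 : q - (j + 1) = a := by omega
        have e2 : q - j = a + 1 := by omega
        have e3 : g - 1 - (j + 1) = 0 := by omega
        have e4 : g - 1 - j = 0 := by omega
        have e5 : min (j + 1) (g - 1) = g - 1 := by omega
        have e6 : min j (g - 1) = g - 1 := by omega
        unfold auxP
        rw [e1, e2, e3, e4, e5, e6]
        ring
      · have hj1 : (i.val + 1) % q = 0 := by
          rw [show i.val + 1 = q from by omega]; exact Nat.mod_self q
        rw [hj1]
        unfold auxP
        rw [show q - 0 = q from by omega, show min 0 (g-1) = 0 from by omega,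
          show g - 1 - 0 = g - 1 from by omega,
          show q - i.val = 1 from by omega, show min i.val (g - 1) = g - 1 from by omega,
          show g - 1 - i.val = 0 from by omega]
        ring
  · refine ⟨0, ?_⟩
    simp only [ZMod.val_zero]
    rw [if_pos (by omega)]
    exact_mod_cast (by omega : m ≠ 0)
  · simp only [ZMod.val_zero]
    have hP0 : auxP g q 0 = (g : ℤ) ^ (g - 1) - 1 := by
      unfold auxP
      simp
    rw [hP0]
    rw [Int.natCast_div]
    push_cast [Nat.cast_sub (by omega : 1 ≤ g)]
    rw [show ((g:ℤ) ^ (g-1) - 1) = ((g:ℤ) - 1) * (∑ i ∈ Finset.range (g - 1), (g : ℤ) ^ i) from by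
        rw [← geom_sum_mul]; ring,
      sq, Int.mul_ediv_mul_of_pos _ _ (by omega : (0:ℤ) < (g:ℤ) - 1)]

theorem stmt19 (g q : ℕ) (hg4 : 4 ≤ g) (hge : Even g)
    (hq : g - 1 < q) (hco : Nat.Coprime q (g - 1))
    (m : ℕ) (hm : m = (g ^ q - 1) / (g - 1)) :
    Nat.Coprime (g - 1) m ∧
      orderOf ((g : ZMod m)) = q ∧
      (∀ e : ℕ, 1 < e → e ∣ m → orderOf ((g : ZMod e)) ≠ 1 ∧ orderOf ((g : ZMod e)) ∣ q) ∧
      ∃ x : ZMod q → ℤ,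
        IsNontrivialCycle g m q x (fun i => if i.val < g - 1 then (m : ℤ) else 0) ∧
        x 0 = ((∑ i ∈ Finset.range (g - 1), g ^ i) / (g - 1) : ℕ) := by
  have hg1 : 1 ≤ g := by omega
  have hgq1 : 1 ≤ g ^ q := Nat.one_le_pow _ _ (by omega)
  have hdvd1 : g - 1 ∣ g ^ q - 1 := by
    have := Nat.sub_dvd_pow_sub_pow g 1 q
    simpa using this
  have hmprod : (g - 1) * m = g ^ q - 1 := by
    rw [hm, Nat.mul_div_cancel' hdvd1]
  have hmZ : ((g : ℤ) - 1) * m = (g : ℤ) ^ q - 1 := by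
    zify [hgq1, hg1] at hmprod
    exact hmprod
  -- m ≥ g^(q-1)
  have hpowq : g ^ q = g ^ (q - 1) * g := by
    rw [← pow_succ]; congr 1; omega
  have hq1pow : 1 ≤ g ^ (q - 1) := Nat.one_le_pow _ _ (by omega)
  have hmlb : g ^ (q - 1) ≤ m := by
    have h1 : g ^ (q - 1) * (g - 1) ≤ (g - 1) * m := by
      rw [hmprod, hpowq, Nat.mul_sub]
      omega
    rw [mul_comm] at h1
    exact Nat.le_of_mul_le_mul_left h1 (by omega)
  have hm2 : 2 ≤ m := by
    have : g ≤ g ^ (q - 1) := by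
      calc g = g ^ 1 := (pow_one g).symm
        _ ≤ g ^ (q - 1) := Nat.pow_le_pow_right (by omega) (by omega)
    omega
  haveI : NeZero m := ⟨by omega⟩
  -- m = geometric sum
  have hmS : (m : ℤ) = ∑ i ∈ Finset.range q, (g : ℤ) ^ i := by
    apply mul_left_cancel₀ (by
      have : (4 : ℤ) ≤ (g : ℤ) := by exact_mod_cast hg4
      omega : ((g : ℤ) - 1) ≠ 0)
    rw [hmZ, ← geom_sum_mul]
    ring
  -- coprimality
  have hmq : m % (g - 1) = q % (g - 1) := by
    have hd : ((g - 1 : ℕ) : ℤ) ∣ (q : ℤ) - (m : ℤ) := by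
      haveI : NeZero (g - 1) := ⟨by omega⟩
      rw [← ZMod.intCast_zmod_eq_zero_iff_dvd]
      push_cast [hmS]
      rw [aux_g_cast g (by omega)]
      simp
    exact (Nat.modEq_iff_dvd.mpr hd : Nat.ModEq (g - 1) m q)
  have hcop : Nat.Coprime (g - 1) m := by
    have : Nat.gcd (g - 1) m = 1 := by
      calc Nat.gcd (g - 1) m = Nat.gcd (m % (g - 1)) (g - 1) := Nat.gcd_rec _ _
        _ = Nat.gcd (q % (g - 1)) (g - 1) := by rw [hmq]
        _ = Nat.gcd (g - 1) q := (Nat.gcd_rec _ _).symm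
        _ = 1 := Nat.coprime_comm.mp hco
    exact this
  refine ⟨hcop, ?_, ?_, ?_⟩
  · -- order of g mod m is q
    have hpow_one : ∀ (e : ℕ) [NeZero e], e ∣ g ^ q - 1 → ((g : ZMod e)) ^ q = 1 := by
      intro e _ he
      have h0 : ((g ^ q - 1 : ℕ) : ZMod e) = 0 := (ZMod.natCast_eq_zero_iff _ _).mpr he
      have h1 : ((g ^ q : ℕ) : ZMod e) = 1 := by
        rw [show g ^ q = (g ^ q - 1) + 1 from by omega]
        push_cast
        push_cast at h0
        rw [h0]; ring
      push_cast at h1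
      exact h1
    have hmdvd : m ∣ g ^ q - 1 := ⟨g - 1, by rw [← hmprod]; ring⟩
    have hone : ((g : ZMod m)) ^ q = 1 := hpow_one m hmdvd
    have hdq : orderOf ((g : ZMod m)) ∣ q := orderOf_dvd_of_pow_eq_one hone
    set d := orderOf ((g : ZMod m)) with hd
    have hd0 : d ≠ 0 := by
      intro h0
      rw [h0] at hdq
      omega
    by_contra hne
    have hdlt : d < q := lt_of_le_of_ne (Nat.le_of_dvd (by omega) hdq) hne
    have hpd : ((g : ZMod m)) ^ d = 1 := pow_orderOf_eq_one _
    have hgd1 : 1 ≤ g ^ d := Nat.one_le_pow _ _ (by omega)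
    have hmd : m ∣ g ^ d - 1 := by
      have h0 : ((g ^ d - 1 : ℕ) : ZMod m) = 0 := by
        push_cast [Nat.cast_sub hgd1]
        rw [hpd]; ring
      exact (ZMod.natCast_eq_zero_iff _ _).mp h0
    have hgd4 : 4 ≤ g ^ d := by
      calc 4 ≤ g := hg4
        _ = g ^ 1 := (pow_one g).symm
        _ ≤ g ^ d := Nat.pow_le_pow_right (by omega) (by omega)
    have hle : m ≤ g ^ d - 1 := Nat.le_of_dvd (by omega) hmd
    have hub : g ^ d ≤ g ^ (q - 1) := Nat.pow_le_pow_right (by omega) (by omega)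
    omega
  · -- divisors
    intro e he1 hem
    haveI : NeZero e := ⟨by omega⟩
    have hmdvd : m ∣ g ^ q - 1 := ⟨g - 1, by rw [← hmprod]; ring⟩
    have hedvd : e ∣ g ^ q - 1 := hem.trans hmdvd
    have hone : ((g : ZMod e)) ^ q = 1 := by
      have h0 : ((g ^ q - 1 : ℕ) : ZMod e) = 0 := (ZMod.natCast_eq_zero_iff _ _).mpr hedvd
      have h1 : ((g ^ q : ℕ) : ZMod e) = 1 := by
        rw [show g ^ q = (g ^ q - 1) + 1 from by omega]
        push_cast
        push_cast at h0
        rw [h0]; ring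
      push_cast at h1
      exact h1
    refine ⟨?_, orderOf_dvd_of_pow_eq_one hone⟩
    intro hord1
    have hg_one : (g : ZMod e) = 1 := orderOf_eq_one_iff.mp hord1
    have hedvd2 : e ∣ g - 1 := by
      have h0 : ((g - 1 : ℕ) : ZMod e) = 0 := by
        push_cast [Nat.cast_sub hg1]
        rw [hg_one]; ring
      exact (ZMod.natCast_eq_zero_iff _ _).mp h0
    have : e ∣ Nat.gcd (g - 1) m := Nat.dvd_gcd hedvd2 hem
    rw [hcop] at this
    exact absurd (Nat.dvd_one.mp this) (by omega)
  · exact cycle_aux g q hg4 hq m hm2 hmZ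
end
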